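/- arXiv:2206.07425 — 2 statements merged into one kernel-verified Lean document; each statement's English description precedes it below -/
import Mathlib

section
/- Consider the time-invariant single-virus layered SIWS model under Assumptions A1 and A2, and suppose ρ(I − hD_f + hB_f) > 1, so a unique endemic equilibrium z* ≫ 0 exists. Regard z* as a function of the parameter matrices (D_f, B_f) on the open region where Assumptions A1–A2 and ρ(I − hD_f + hB_f) > 1 hold. Then z* depends differentiably on the parameters and, for each i ∈ {1,…,n+m}, the i-th component z*_i is a strictly decreasing function of the i-th diagonal entry of D_f and a strictly increasing function of every entry of the i-th row of B_f: the corresponding partial derivatives satisfy ∂z*_i/∂(D_f)_{ii} < 0 and ∂z*_i/∂(B_f)_{ij} > 0. -/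
open Matrix Filter

/-- Index type of the layered system: `n` population nodes plus `m` resource nodes. -/
abbrev SIdx (n m : ℕ) := Fin n ⊕ Fin m

/-- Spectral radius of a real square matrix (largest modulus of a complex eigenvalue). -/
noncomputable def specRad {ι : Type} [Fintype ι] [DecidableEq ι] (M : Matrix ι ι ℝ) : ℝ :=
  sSup {r : ℝ | ∃ μ ∈ spectrum ℂ (M.map fun x => (x : ℂ)), r = ‖μ‖}

/-- Irreducibility of a matrix: every node can reach every other node in the associated graph. -/
def Irred {ι : Type} [Fintype ι] [DecidableEq ι] (M : Matrix ι ι ℝ) : Prop :=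
  ∀ i j : ι, i ≠ j → ∃ k : ℕ, (M ^ k) i j ≠ 0

/-- The matrix `Z(z)`: diagonal of the population part of the state, zeros elsewhere. -/
noncomputable def Zm {n m : ℕ} (z : SIdx n m → ℝ) : Matrix (SIdx n m) (SIdx n m) ℝ :=
  Matrix.diagonal (Sum.elim (fun i => z (Sum.inl i)) fun _ => (0 : ℝ))

/-- The layered infection matrix `B_f = [[B, B_w],[C_w, 0]]`. -/
noncomputable def BfM {n m : ℕ} (B : Matrix (Fin n) (Fin n) ℝ) (Bw : Matrix (Fin n) (Fin m) ℝ)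
    (Cw : Matrix (Fin m) (Fin n) ℝ) : Matrix (SIdx n m) (SIdx n m) ℝ :=
  Matrix.fromBlocks B Bw Cw 0

/-- The layered healing matrix `D_f = diag(δ, δ^w)`. -/
noncomputable def DfM {n m : ℕ} (δ : Fin n → ℝ) (δw : Fin m → ℝ) :
    Matrix (SIdx n m) (SIdx n m) ℝ :=
  Matrix.diagonal (Sum.elim δ δw)

/-- One step of the single-virus SIWS dynamics:
`z ↦ z − h (D_f − (I − Z(z)) B_f) z`. -/
noncomputable def step {n m : ℕ} (h : ℝ) (Dfm Bfm : Matrix (SIdx n m) (SIdx n m) ℝ)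
    (z : SIdx n m → ℝ) : SIdx n m → ℝ :=
  z - h • ((Dfm - (1 - Zm z) * Bfm).mulVec z)

/-- The system domain `D = [0,1]^n × [0, w_max]^m`. -/
def inD {n m : ℕ} (wmax : ℝ) (z : SIdx n m → ℝ) : Prop :=
  (∀ i : Fin n, z (Sum.inl i) ∈ Set.Icc (0 : ℝ) 1) ∧
    ∀ j : Fin m, z (Sum.inr j) ∈ Set.Icc (0 : ℝ) wmax

/-- Assumption A1 on the parameters of the single-virus SIWS model. -/
structure A1 {n m : ℕ} (h : ℝ) (δ : Fin n → ℝ) (δw : Fin m → ℝ)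
    (B : Matrix (Fin n) (Fin n) ℝ) (Bw : Matrix (Fin n) (Fin m) ℝ)
    (Cw : Matrix (Fin m) (Fin n) ℝ) (wmax : ℝ) : Prop where
  h_pos : 0 < h
  delta_pos : ∀ i, 0 < δ i
  deltaw_pos : ∀ j, 0 < δw j
  B_nonneg : ∀ i j, 0 ≤ B i j
  Bw_nonneg : ∀ i j, 0 ≤ Bw i j
  Cw_nonneg : ∀ j k, 0 ≤ Cw j k
  Cw_row_pos : ∀ j, ∃ k, 0 < Cw j k
  wmax_pos : 0 < wmax
  ratio_mem : ∀ j, (∑ k, Cw j k) / δw j ∈ Set.Icc (0 : ℝ) wmax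
  h_delta : ∀ i, h * δ i ∈ Set.Ioc (0 : ℝ) 1
  h_deltaw : ∀ j, h * δw j ∈ Set.Ioc (0 : ℝ) 1
  h_beta : ∀ i, h * ((∑ j, B i j) + ∑ j, Bw i j * wmax) ∈ Set.Icc (0 : ℝ) 1

/-- Assumption A3: `h(δ_i + Σ_j β_{ij} + Σ_j β^w_{ij} w_max) ∈ [0,1]` for all `i`. -/
def A3 {n m : ℕ} (h : ℝ) (δ : Fin n → ℝ) (B : Matrix (Fin n) (Fin n) ℝ)
    (Bw : Matrix (Fin n) (Fin m) ℝ) (wmax : ℝ) : Prop :=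
  ∀ i, h * (δ i + (∑ j, B i j) + ∑ j, Bw i j * wmax) ∈ Set.Icc (0 : ℝ) 1


open Topology
open scoped Classical

namespace S9

variable {n m : ℕ}

/-- indicator of population (inl) indices -/
def inlInd : SIdx n m → ℝ := Sum.elim (fun _ => 1) (fun _ => 0)

/-- the saturation factor `1 - x` on population nodes, `1` on resource nodes -/
def sat (z : SIdx n m → ℝ) (p : SIdx n m) : ℝ := 1 - inlInd p * z p

/-- the equilibrium equations -/
def EqFix (d : SIdx n m → ℝ) (M : Matrix (SIdx n m) (SIdx n m) ℝ) (z : SIdx n m → ℝ) : Prop :=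
  ∀ p, d p * z p = sat z p * M.mulVec z p

def PosFix (d : SIdx n m → ℝ) (M : Matrix (SIdx n m) (SIdx n m) ℝ) (z : SIdx n m → ℝ) : Prop :=
  (∀ p, 0 < z p) ∧ EqFix d M z

lemma inlInd_inl (i : Fin n) : (inlInd (Sum.inl i : SIdx n m)) = 1 := rfl
lemma inlInd_inr (j : Fin m) : (inlInd (Sum.inr j : SIdx n m)) = 0 := rfl

lemma sat_inl (z : SIdx n m → ℝ) (i : Fin n) : sat z (Sum.inl i) = 1 - z (Sum.inl i) := by
  simp [sat, inlInd]
lemma sat_inr (z : SIdx n m → ℝ) (j : Fin m) : sat z (Sum.inr j) = 1 := by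
  simp [sat, inlInd]

lemma mulVec_nonneg {M : Matrix (SIdx n m) (SIdx n m) ℝ} (hM : ∀ p q, 0 ≤ M p q)
    {z : SIdx n m → ℝ} (hz : ∀ p, 0 ≤ z p) : ∀ p, 0 ≤ M.mulVec z p := by
  intro p
  simp only [Matrix.mulVec, dotProduct]
  exact Finset.sum_nonneg fun q _ => mul_nonneg (hM p q) (hz q)

lemma mulVec_mono {M : Matrix (SIdx n m) (SIdx n m) ℝ} (hM : ∀ p q, 0 ≤ M p q)
    {z z' : SIdx n m → ℝ} (hzz : ∀ p, z p ≤ z' p) : ∀ p, M.mulVec z p ≤ M.mulVec z' p := by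
  intro p
  simp only [Matrix.mulVec, dotProduct]
  exact Finset.sum_le_sum fun q _ => mul_le_mul_of_nonneg_left (hzz q) (hM p q)

lemma oneSub_Zm (z : SIdx n m → ℝ) :
    (1 - Zm z : Matrix (SIdx n m) (SIdx n m) ℝ) = Matrix.diagonal (fun p => sat z p) := by
  ext p q
  rcases eq_or_ne p q with rfl | hpq
  · cases p <;>
      simp [Zm, sat, inlInd, Matrix.sub_apply, Matrix.diagonal_apply_eq, Matrix.one_apply_eq]
  · simp [Zm, Matrix.sub_apply, Matrix.diagonal_apply_ne _ hpq, Matrix.one_apply_ne hpq]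

lemma step_fixed_iff {h : ℝ} (hh : h ≠ 0) (d : SIdx n m → ℝ)
    (M : Matrix (SIdx n m) (SIdx n m) ℝ) (z : SIdx n m → ℝ) :
    step h (Matrix.diagonal d) M z = z ↔ EqFix d M z := by
  unfold step
  rw [sub_eq_self]
  constructor
  · intro hz p
    have := congrFun hz p
    simp only [Pi.smul_apply, smul_eq_mul, Pi.zero_apply] at this
    have h2 : ((Matrix.diagonal d - (1 - Zm z) * M).mulVec z) p = 0 := by
      rcases mul_eq_zero.mp this with h' | h'
      · exact absurd h' hh
      · exact h'
    rw [Matrix.sub_mulVec, oneSub_Zm, ← Matrix.mulVec_mulVec] at h2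
    simp only [Pi.sub_apply, Matrix.mulVec_diagonal] at h2
    linarith [h2]
  · intro hz
    funext p
    simp only [Pi.smul_apply, smul_eq_mul, Pi.zero_apply]
    rw [Matrix.sub_mulVec, oneSub_Zm, ← Matrix.mulVec_mulVec]
    simp only [Pi.sub_apply, Matrix.mulVec_diagonal]
    rw [hz p]
    ring

/-- basic consequences of being a positive fixed point -/
lemma posfix_facts {d : SIdx n m → ℝ} {M : Matrix (SIdx n m) (SIdx n m) ℝ} {z : SIdx n m → ℝ}
    (hd : ∀ p, 0 < d p) (hM : ∀ p q, 0 ≤ M p q) (hz : PosFix d M z) :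
    ∀ p, 0 < M.mulVec z p ∧ 0 < sat z p := by
  intro p
  have ha : 0 ≤ M.mulVec z p := mulVec_nonneg hM (fun q => (hz.1 q).le) p
  have heq := hz.2 p
  have hl : 0 < d p * z p := mul_pos (hd p) (hz.1 p)
  rw [heq] at hl
  have hs : 0 < sat z p := by
    by_contra hc
    push_neg at hc
    nlinarith
  exact ⟨by nlinarith, hs⟩

lemma pow_entry_nonneg {M : Matrix (SIdx n m) (SIdx n m) ℝ} (hM : ∀ p q, 0 ≤ M p q) :
    ∀ k, ∀ p q, 0 ≤ (M ^ k) p q := by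
  intro k
  induction k with
  | zero =>
    intro p q
    rcases eq_or_ne p q with rfl | hpq
    · simp [pow_zero, Matrix.one_apply_eq]
    · simp [pow_zero, Matrix.one_apply_ne hpq]
  | succ k ih =>
    intro p q
    rw [pow_succ]
    simp only [Matrix.mul_apply]
    exact Finset.sum_nonneg fun r _ => mul_nonneg (ih p r) (hM r q)

lemma comb_lemma {M : Matrix (SIdx n m) (SIdx n m) ℝ} (hn : 0 < n) (hirr : Irred M)
    (S : Set (SIdx n m)) (hS : S.Nonempty) (hSr : ∀ p ∈ S, ∃ j, p = Sum.inr j)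
    (hcl : ∀ p ∈ S, ∀ q, M p q ≠ 0 → q ∈ S) : False := by
  obtain ⟨p, hp⟩ := hS
  set i0 : SIdx n m := Sum.inl ⟨0, hn⟩ with hi0
  have hpne : p ≠ i0 := by
    obtain ⟨j, rfl⟩ := hSr p hp
    simp [hi0]
  have hzero : ∀ k : ℕ, ∀ q ∈ S, (M ^ k) q i0 = 0 := by
    intro k
    induction k with
    | zero =>
      intro q hq
      obtain ⟨j, rfl⟩ := hSr q hq
      have : (Sum.inr j : SIdx n m) ≠ i0 := by simp [hi0]
      simp [pow_zero, Matrix.one_apply_ne this]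
    | succ k ih =>
      intro q hq
      rw [pow_succ']
      simp only [Matrix.mul_apply]
      apply Finset.sum_eq_zero
      intro r _
      by_cases hMr : M q r = 0
      · rw [hMr, zero_mul]
      · rw [ih r (hcl q hq r hMr), mul_zero]
  obtain ⟨k, hk⟩ := hirr p i0 hpne
  exact hk (hzero k p hp)

lemma ratio_max (hne : Nonempty (SIdx n m)) (ζ v : SIdx n m → ℝ) (hζ : ∀ p, 0 < ζ p) :
    ∃ σ : ℝ, (∀ p, v p ≤ σ * ζ p) ∧ ∃ p0, v p0 = σ * ζ p0 := by
  have hne' : (Finset.univ : Finset (SIdx n m)).Nonempty := Finset.univ_nonempty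
  refine ⟨Finset.univ.sup' hne' (fun p => v p / ζ p), fun p => ?_, ?_⟩
  · have h1 := Finset.le_sup' (fun p => v p / ζ p) (Finset.mem_univ p)
    rw [div_le_iff₀ (hζ p)] at h1
    linarith [h1]
  · obtain ⟨p0, _, hp0⟩ := Finset.exists_mem_eq_sup' hne' (fun p => v p / ζ p)
    refine ⟨p0, ?_⟩
    rw [hp0, div_mul_cancel₀ _ (hζ p0).ne']

lemma smul_mulVec_pt {M : Matrix (SIdx n m) (SIdx n m) ℝ} (σ : ℝ) (z : SIdx n m → ℝ) (p) :
    M.mulVec (fun q => σ * z q) p = σ * M.mulVec z p := by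
  simp only [Matrix.mulVec, dotProduct, Finset.mul_sum]
  exact Finset.sum_congr rfl fun q _ => by ring

lemma posfix_le {d : SIdx n m → ℝ} {M : Matrix (SIdx n m) (SIdx n m) ℝ}
    (hn : 0 < n) (hd : ∀ p, 0 < d p) (hM : ∀ p q, 0 ≤ M p q) (hirr : Irred M)
    {y z : SIdx n m → ℝ} (hy : PosFix d M y) (hz : PosFix d M z) : ∀ p, y p ≤ z p := by
  have hne : Nonempty (SIdx n m) := ⟨Sum.inl ⟨0, hn⟩⟩
  obtain ⟨σ, hle, p0, hp0⟩ := ratio_max hne z y hz.1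
  by_cases hσ : σ ≤ 1
  · intro p
    have h1 := hle p
    have h2 := (hz.1 p)
    nlinarith
  push_neg at hσ
  exfalso
  have hσ0 : (0:ℝ) < σ := lt_trans one_pos hσ
  have hfy := posfix_facts hd hM hy
  have hfz := posfix_facts hd hM hz
  have hay : ∀ p, M.mulVec y p ≤ σ * M.mulVec z p := by
    intro p
    have h1 := mulVec_mono hM hle p
    rwa [smul_mulVec_pt σ z p] at h1
  set S : Set (SIdx n m) := {p | y p = σ * z p} with hSdef
  have hSr : ∀ p ∈ S, ∃ j, p = Sum.inr j := by
    intro p hp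
    cases p with
    | inr j => exact ⟨j, rfl⟩
    | inl i =>
      exfalso
      have hyeq := hy.2 (Sum.inl i)
      have hzeq := hz.2 (Sum.inl i)
      rw [sat_inl] at hyeq hzeq
      have hsy : 0 < sat y (Sum.inl i) := (hfy (Sum.inl i)).2
      have hsz : 0 < sat z (Sum.inl i) := (hfz (Sum.inl i)).2
      rw [sat_inl] at hsy hsz
      have hazp : 0 < M.mulVec z (Sum.inl i) := (hfz (Sum.inl i)).1
      have haq := hay (Sum.inl i)
      have hpS : y (Sum.inl i) = σ * z (Sum.inl i) := hp
      have hdp := hd (Sum.inl i)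
      have hzp := hz.1 (Sum.inl i)
      have key : (1 - y (Sum.inl i)) * (M.mulVec y (Sum.inl i)) ≤
          (1 - y (Sum.inl i)) * (σ * M.mulVec z (Sum.inl i)) :=
        mul_le_mul_of_nonneg_left haq hsy.le
      rw [← hyeq] at key
      rw [hpS] at key hsy
      have key1 : σ * (d (Sum.inl i) * z (Sum.inl i)) ≤
          σ * ((1 - σ * z (Sum.inl i)) * M.mulVec z (Sum.inl i)) := by
        linear_combination key
      have key2 : d (Sum.inl i) * z (Sum.inl i) ≤
          (1 - σ * z (Sum.inl i)) * M.mulVec z (Sum.inl i) :=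
        le_of_mul_le_mul_left key1 hσ0
      nlinarith [mul_pos hazp hzp, sub_pos.mpr hσ, mul_pos (mul_pos hazp hzp) (sub_pos.mpr hσ)]
  have hcl : ∀ p ∈ S, ∀ q, M p q ≠ 0 → q ∈ S := by
    intro p hp q hMq
    obtain ⟨j, rfl⟩ := hSr p hp
    have hyeq := hy.2 (Sum.inr j)
    have hzeq := hz.2 (Sum.inr j)
    rw [sat_inr] at hyeq hzeq
    have hpS : y (Sum.inr j) = σ * z (Sum.inr j) := hp
    have hEq : M.mulVec y (Sum.inr j) = σ * M.mulVec z (Sum.inr j) := by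
      rw [one_mul] at hyeq hzeq
      rw [← hyeq, ← hzeq, hpS]
      ring
    have hsum : ∑ q', M (Sum.inr j) q' * (σ * z q' - y q') = 0 := by
      have hexp : ∑ q', M (Sum.inr j) q' * (σ * z q' - y q')
          = σ * M.mulVec z (Sum.inr j) - M.mulVec y (Sum.inr j) := by
        simp only [Matrix.mulVec, dotProduct, Finset.mul_sum, ← Finset.sum_sub_distrib]
        exact Finset.sum_congr rfl fun q' _ => by ring
      rw [hexp, hEq]
      ring
    have hterm := (Finset.sum_eq_zero_iff_of_nonneg (fun q' _ =>
      mul_nonneg (hM _ q') (by linarith [hle q'] : (0:ℝ) ≤ σ * z q' - y q'))).mp hsum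
        q (Finset.mem_univ q)
    have : σ * z q - y q = 0 := by
      rcases mul_eq_zero.mp hterm with h' | h'
      · exact absurd h' hMq
      · exact h'
    show y q = σ * z q
    linarith
  exact comb_lemma hn hirr S ⟨p0, hp0⟩ hSr hcl

lemma posfix_unique {d : SIdx n m → ℝ} {M : Matrix (SIdx n m) (SIdx n m) ℝ}
    (hn : 0 < n) (hd : ∀ p, 0 < d p) (hM : ∀ p q, 0 ≤ M p q) (hirr : Irred M)
    {y z : SIdx n m → ℝ} (hy : PosFix d M y) (hz : PosFix d M z) : y = z :=
  funext fun p => le_antisymm (posfix_le hn hd hM hirr hy hz p) (posfix_le hn hd hM hirr hz hy p)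

/-- the linearization of the fixed point map at `z` -/
def Lmap (d : SIdx n m → ℝ) (M : Matrix (SIdx n m) (SIdx n m) ℝ) (z v : SIdx n m → ℝ) :
    SIdx n m → ℝ :=
  fun p => (d p + inlInd p * M.mulVec z p) * v p - sat z p * M.mulVec v p

lemma Lmap_sub (d : SIdx n m → ℝ) (M : Matrix (SIdx n m) (SIdx n m) ℝ) (z v w : SIdx n m → ℝ) :
    ∀ p, Lmap d M z (v - w) p = Lmap d M z v p - Lmap d M z w p := by
  intro p
  simp only [Lmap, Matrix.mulVec_sub, Pi.sub_apply]
  ring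

lemma Lmap_neg (d : SIdx n m → ℝ) (M : Matrix (SIdx n m) (SIdx n m) ℝ) (z v : SIdx n m → ℝ) :
    ∀ p, Lmap d M z (-v) p = - Lmap d M z v p := by
  intro p
  simp only [Lmap, Matrix.mulVec_neg, Pi.neg_apply]
  ring

lemma coef_pos {d : SIdx n m → ℝ} {M : Matrix (SIdx n m) (SIdx n m) ℝ} {z : SIdx n m → ℝ}
    (hd : ∀ p, 0 < d p) (hM : ∀ p q, 0 ≤ M p q) (hz : ∀ p, 0 ≤ z p) (p : SIdx n m) :
    0 < d p + inlInd p * M.mulVec z p := by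
  have h1 := hd p
  have h2 := mulVec_nonneg hM hz p
  cases p with
  | inl i => rw [inlInd_inl]; linarith
  | inr j => rw [inlInd_inr]; linarith

lemma Lmap_inj {d : SIdx n m → ℝ} {M : Matrix (SIdx n m) (SIdx n m) ℝ}
    (hn : 0 < n) (hd : ∀ p, 0 < d p) (hM : ∀ p q, 0 ≤ M p q) (hirr : Irred M)
    {z : SIdx n m → ℝ} (hz : PosFix d M z) {v : SIdx n m → ℝ}
    (hv : ∀ p, Lmap d M z v p = 0) : v = 0 := by
  have hne : Nonempty (SIdx n m) := ⟨Sum.inl ⟨0, hn⟩⟩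
  set w : SIdx n m → ℝ := fun p => |v p| with hwdef
  have hfz := posfix_facts hd hM hz
  have habs : ∀ p, |M.mulVec v p| ≤ M.mulVec w p := by
    intro p
    simp only [Matrix.mulVec, dotProduct]
    calc |∑ q, M p q * v q| ≤ ∑ q, |M p q * v q| := Finset.abs_sum_le_sum_abs _ _
      _ = ∑ q, M p q * w q :=
        Finset.sum_congr rfl fun q _ => by rw [abs_mul, abs_of_nonneg (hM p q)]
  have hkey : ∀ p, (d p + inlInd p * M.mulVec z p) * w p ≤ sat z p * M.mulVec w p := by
    intro p
    have h0 := hv p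
    unfold Lmap at h0
    have h1 : (d p + inlInd p * M.mulVec z p) * v p = sat z p * M.mulVec v p := by linarith
    have hcoef := (coef_pos hd hM (fun q => (hz.1 q).le) p).le
    have h2 : (d p + inlInd p * M.mulVec z p) * w p = |sat z p * M.mulVec v p| := by
      rw [← h1, abs_mul, abs_of_nonneg hcoef]
    rw [h2, abs_mul, abs_of_nonneg (hfz p).2.le]
    exact mul_le_mul_of_nonneg_left (habs p) (hfz p).2.le
  obtain ⟨σ, hle, q0, hq0⟩ := ratio_max hne z w hz.1
  by_cases hσ : σ ≤ 0
  · funext p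
    have h1 : w p ≤ 0 := le_trans (hle p) (by nlinarith [hz.1 p])
    have h2 := abs_nonneg (v p)
    have h3 : |v p| = 0 := le_antisymm h1 h2
    simpa using h3
  push_neg at hσ
  exfalso
  have hmw : ∀ p, M.mulVec w p ≤ σ * M.mulVec z p := by
    intro p
    have h1 := mulVec_mono hM hle p
    rwa [smul_mulVec_pt] at h1
  set S : Set (SIdx n m) := {p | w p = σ * z p} with hSdef
  have hSr : ∀ p ∈ S, ∃ j, p = Sum.inr j := by
    intro p hp
    cases p with
    | inr j => exact ⟨j, rfl⟩
    | inl i =>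
      exfalso
      have hzeq := hz.2 (Sum.inl i)
      rw [sat_inl] at hzeq
      have hsz : 0 < 1 - z (Sum.inl i) := by
        have := (hfz (Sum.inl i)).2; rwa [sat_inl] at this
      have hazp : 0 < M.mulVec z (Sum.inl i) := (hfz (Sum.inl i)).1
      have hzp := hz.1 (Sum.inl i)
      have hkey' := hkey (Sum.inl i)
      rw [sat_inl, inlInd_inl] at hkey'
      have hpS : w (Sum.inl i) = σ * z (Sum.inl i) := hp
      rw [hpS] at hkey'
      have h2 : (1 - z (Sum.inl i)) * M.mulVec w (Sum.inl i) ≤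
          (1 - z (Sum.inl i)) * (σ * M.mulVec z (Sum.inl i)) :=
        mul_le_mul_of_nonneg_left (hmw _) hsz.le
      have hzeqσ : σ * (d (Sum.inl i) * z (Sum.inl i)) =
          σ * ((1 - z (Sum.inl i)) * M.mulVec z (Sum.inl i)) := by rw [hzeq]
      nlinarith [mul_pos (mul_pos hσ hazp) hzp]
  have hcl : ∀ p ∈ S, ∀ q, M p q ≠ 0 → q ∈ S := by
    intro p hp q hMq
    obtain ⟨j, rfl⟩ := hSr p hp
    have hzeq := hz.2 (Sum.inr j)
    rw [sat_inr, one_mul] at hzeq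
    have hkey' := hkey (Sum.inr j)
    rw [sat_inr, inlInd_inr, one_mul, zero_mul, add_zero] at hkey'
    have hpS : w (Sum.inr j) = σ * z (Sum.inr j) := hp
    rw [hpS] at hkey'
    have hEq : M.mulVec w (Sum.inr j) = σ * M.mulVec z (Sum.inr j) := by
      have h1 := hmw (Sum.inr j)
      nlinarith [hzeq, hkey']
    have hsum : ∑ q', M (Sum.inr j) q' * (σ * z q' - w q') = 0 := by
      have hexp : ∑ q', M (Sum.inr j) q' * (σ * z q' - w q')
          = σ * M.mulVec z (Sum.inr j) - M.mulVec w (Sum.inr j) := by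
        simp only [Matrix.mulVec, dotProduct, Finset.mul_sum, ← Finset.sum_sub_distrib]
        exact Finset.sum_congr rfl fun q' _ => by ring
      rw [hexp, hEq]; ring
    have hterm := (Finset.sum_eq_zero_iff_of_nonneg (fun q' _ =>
      mul_nonneg (hM _ q') (by linarith [hle q'] : (0:ℝ) ≤ σ * z q' - w q'))).mp hsum
        q (Finset.mem_univ q)
    have h3 : σ * z q - w q = 0 := by
      rcases mul_eq_zero.mp hterm with h' | h'
      · exact absurd h' hMq
      · exact h'
    show w q = σ * z q
    linarith
  exact comb_lemma hn hirr S ⟨q0, hq0⟩ hSr hcl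

lemma Lmap_sign_neg {d : SIdx n m → ℝ} {M : Matrix (SIdx n m) (SIdx n m) ℝ}
    (hn : 0 < n) (hd : ∀ p, 0 < d p) (hM : ∀ p q, 0 ≤ M p q) (hirr : Irred M)
    {z : SIdx n m → ℝ} (hz : PosFix d M z) {v : SIdx n m → ℝ} {p0 : SIdx n m} {β : ℝ}
    (hβ : β < 0) (hv : ∀ p, Lmap d M z v p = (if p = p0 then β else 0)) : v p0 < 0 := by
  have hne : Nonempty (SIdx n m) := ⟨Sum.inl ⟨0, hn⟩⟩
  have hfz := posfix_facts hd hM hz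
  obtain ⟨σ, hle, q0, hq0⟩ := ratio_max hne z v hz.1
  have hσ : σ ≤ 0 := by
    by_contra hσ
    push_neg at hσ
    have hmv : ∀ p, M.mulVec v p ≤ σ * M.mulVec z p := by
      intro p
      have h1 := mulVec_mono hM hle p
      rwa [smul_mulVec_pt] at h1
    set S : Set (SIdx n m) := {p | v p = σ * z p} with hSdef
    -- being in S leads to: p is inr and p ≠ p0, plus closure
    have hmain : ∀ p ∈ S, (p ≠ p0) ∧ ∃ j, p = Sum.inr j := by
      intro p hp
      have hpS : v p = σ * z p := hp
      have heq := hv p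
      unfold Lmap at heq
      have hzp := hz.1 p
      have hazp := (hfz p).1
      have hszp := (hfz p).2
      have hup : sat z p * M.mulVec v p ≤ sat z p * (σ * M.mulVec z p) :=
        mul_le_mul_of_nonneg_left (hmv p) hszp.le
      -- the fixed point identity in coefficient form:
      -- (d p + inlInd p * a p) * z p = sat z p * a p + inlInd p * a p * z p ... derive per case
      constructor
      · rintro rfl
        rw [if_pos rfl] at heq
        -- (d+ia) σ z − sat Mv = β
        cases p with
        | inl i =>
          have hzeq := hz.2 (Sum.inl i)
          rw [sat_inl] at hzeq hup
          rw [sat_inl, inlInd_inl, one_mul, hpS] at heq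
          have hzeqσ : σ * (d (Sum.inl i) * z (Sum.inl i)) =
              σ * ((1 - z (Sum.inl i)) * M.mulVec z (Sum.inl i)) := by rw [hzeq]
          nlinarith [mul_pos (mul_pos hσ hazp) (hz.1 (Sum.inl i))]
        | inr j =>
          have hzeq := hz.2 (Sum.inr j)
          rw [sat_inr, one_mul] at hzeq hup
          rw [sat_inr, inlInd_inr, one_mul, zero_mul, add_zero, hpS] at heq
          nlinarith [hzeq, hup, heq]
      · cases p with
        | inr j => exact ⟨j, rfl⟩
        | inl i =>
          exfalso
          by_cases hpp : (Sum.inl i : SIdx n m) = p0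
          · -- same computation as above, with β
            subst hpp
            rw [if_pos rfl] at heq
            have hzeq := hz.2 (Sum.inl i)
            rw [sat_inl] at hzeq hup
            rw [sat_inl, inlInd_inl, one_mul, hpS] at heq
            have hzeqσ : σ * (d (Sum.inl i) * z (Sum.inl i)) =
                σ * ((1 - z (Sum.inl i)) * M.mulVec z (Sum.inl i)) := by rw [hzeq]
            nlinarith [mul_pos (mul_pos hσ hazp) (hz.1 (Sum.inl i))]
          · rw [if_neg hpp] at heq
            have hzeq := hz.2 (Sum.inl i)
            rw [sat_inl] at hzeq hup
            rw [sat_inl, inlInd_inl, one_mul, hpS] at heq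
            have hzeqσ : σ * (d (Sum.inl i) * z (Sum.inl i)) =
                σ * ((1 - z (Sum.inl i)) * M.mulVec z (Sum.inl i)) := by rw [hzeq]
            nlinarith [mul_pos (mul_pos hσ hazp) (hz.1 (Sum.inl i))]
    have hcl : ∀ p ∈ S, ∀ q, M p q ≠ 0 → q ∈ S := by
      intro p hp q hMq
      obtain ⟨hne0, j, rfl⟩ := hmain p hp
      have hpS : v (Sum.inr j) = σ * z (Sum.inr j) := hp
      have heq := hv (Sum.inr j)
      unfold Lmap at heq
      rw [if_neg hne0, sat_inr, inlInd_inr, one_mul, zero_mul, add_zero, hpS] at heq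
      have hzeq := hz.2 (Sum.inr j)
      rw [sat_inr, one_mul] at hzeq
      have hEq : M.mulVec v (Sum.inr j) = σ * M.mulVec z (Sum.inr j) := by
        have h1 := hmv (Sum.inr j)
        nlinarith [hzeq, heq]
      have hsum : ∑ q', M (Sum.inr j) q' * (σ * z q' - v q') = 0 := by
        have hexp : ∑ q', M (Sum.inr j) q' * (σ * z q' - v q')
            = σ * M.mulVec z (Sum.inr j) - M.mulVec v (Sum.inr j) := by
          simp only [Matrix.mulVec, dotProduct, Finset.mul_sum, ← Finset.sum_sub_distrib]
          exact Finset.sum_congr rfl fun q' _ => by ring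
        rw [hexp, hEq]; ring
      have hterm := (Finset.sum_eq_zero_iff_of_nonneg (fun q' _ =>
        mul_nonneg (hM _ q') (by linarith [hle q'] : (0:ℝ) ≤ σ * z q' - v q'))).mp hsum
          q (Finset.mem_univ q)
      have h3 : σ * z q - v q = 0 := by
        rcases mul_eq_zero.mp hterm with h' | h'
        · exact absurd h' hMq
        · exact h'
      show v q = σ * z q
      linarith
    exact comb_lemma hn hirr S ⟨q0, hq0⟩ (fun p hp => (hmain p hp).2) hcl
  -- now σ ≤ 0, hence v ≤ 0 everywhere
  have hvle : ∀ p, v p ≤ 0 := fun p => le_trans (hle p) (by nlinarith [hz.1 p])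
  have hMv : M.mulVec v p0 ≤ 0 := by
    simp only [Matrix.mulVec, dotProduct]
    exact Finset.sum_nonpos fun q _ => mul_nonpos_of_nonneg_of_nonpos (hM p0 q) (hvle q)
  have heq := hv p0
  unfold Lmap at heq
  rw [if_pos rfl] at heq
  have hcoef := coef_pos hd hM (fun q => (hz.1 q).le) p0
  have hsnn := (posfix_facts hd hM hz p0).2.le
  nlinarith [mul_nonpos_of_nonneg_of_nonpos hsnn hMv]

lemma Lmap_sign_pos {d : SIdx n m → ℝ} {M : Matrix (SIdx n m) (SIdx n m) ℝ}
    (hn : 0 < n) (hd : ∀ p, 0 < d p) (hM : ∀ p q, 0 ≤ M p q) (hirr : Irred M)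
    {z : SIdx n m → ℝ} (hz : PosFix d M z) {v : SIdx n m → ℝ} {p0 : SIdx n m} {β : ℝ}
    (hβ : 0 < β) (hv : ∀ p, Lmap d M z v p = (if p = p0 then β else 0)) : 0 < v p0 := by
  have hneg : (-v) p0 < 0 := by
    apply Lmap_sign_neg hn hd hM hirr hz (β := -β) (by linarith)
    intro p
    rw [Lmap_neg, hv p]
    split <;> ring
  simpa using hneg

lemma inlInd_nonneg (p : SIdx n m) : 0 ≤ (inlInd p : ℝ) := by
  cases p with
  | inl i => rw [inlInd_inl]; norm_num
  | inr j => rw [inlInd_inr]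

lemma inlInd_le_one (p : SIdx n m) : (inlInd p : ℝ) ≤ 1 := by
  cases p with
  | inl i => rw [inlInd_inl]
  | inr j => rw [inlInd_inr]; norm_num

/-- the transformed fixed-point map `G` -/
noncomputable def Gm (d : SIdx n m → ℝ) (M : Matrix (SIdx n m) (SIdx n m) ℝ)
    (z : SIdx n m → ℝ) : SIdx n m → ℝ :=
  fun p => M.mulVec z p / (d p + inlInd p * M.mulVec z p)

lemma Gm_fix_iff {d : SIdx n m → ℝ} {M : Matrix (SIdx n m) (SIdx n m) ℝ}
    (hd : ∀ p, 0 < d p) (hM : ∀ p q, 0 ≤ M p q) {z : SIdx n m → ℝ} (hz : ∀ p, 0 ≤ z p) :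
    Gm d M z = z ↔ EqFix d M z := by
  have hden : ∀ p, 0 < d p + inlInd p * M.mulVec z p := coef_pos hd hM hz
  constructor
  · intro hfix p
    have h1 := congrFun hfix p
    unfold Gm at h1
    rw [div_eq_iff (hden p).ne'] at h1
    unfold sat
    nlinarith [h1]
  · intro heq
    funext p
    unfold Gm
    rw [div_eq_iff (hden p).ne']
    have h1 := heq p
    unfold sat at h1
    nlinarith [h1]

lemma Gm_nonneg {d : SIdx n m → ℝ} {M : Matrix (SIdx n m) (SIdx n m) ℝ}
    (hd : ∀ p, 0 < d p) (hM : ∀ p q, 0 ≤ M p q) {z : SIdx n m → ℝ} (hz : ∀ p, 0 ≤ z p) :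
    ∀ p, 0 ≤ Gm d M z p := by
  intro p
  exact div_nonneg (mulVec_nonneg hM hz p) (coef_pos hd hM hz p).le

lemma Gm_mono {d : SIdx n m → ℝ} {M : Matrix (SIdx n m) (SIdx n m) ℝ}
    (hd : ∀ p, 0 < d p) (hM : ∀ p q, 0 ≤ M p q) {z z' : SIdx n m → ℝ}
    (hz : ∀ p, 0 ≤ z p) (hzz : ∀ p, z p ≤ z' p) : ∀ p, Gm d M z p ≤ Gm d M z' p := by
  intro p
  have hz' : ∀ q, 0 ≤ z' q := fun q => le_trans (hz q) (hzz q)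
  have ha := mulVec_nonneg hM hz p
  have ha' := mulVec_nonneg hM hz' p
  have haa := mulVec_mono hM hzz p
  have hden := coef_pos hd hM hz p
  have hden' := coef_pos hd hM hz' p
  unfold Gm
  rw [div_le_div_iff₀ hden hden']
  have hind := inlInd_nonneg (n := n) (m := m) p
  nlinarith [hd p]

lemma mulVec_inlInd (M : Matrix (SIdx n m) (SIdx n m) ℝ) (p : SIdx n m) :
    M.mulVec inlInd p = ∑ k, M p (Sum.inl k) := by
  simp only [Matrix.mulVec, dotProduct, Fintype.sum_sum_type]
  simp [inlInd]

lemma exists_posfix {d : SIdx n m → ℝ} {M : Matrix (SIdx n m) (SIdx n m) ℝ}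
    (hn : 0 < n) (hd : ∀ p, 0 < d p) (hM : ∀ p q, 0 ≤ M p q)
    (hbr : ∀ j l, M (Sum.inr j) (Sum.inr l) = 0)
    (hrow : ∀ j : Fin m, 0 < ∑ k, M (Sum.inr j) (Sum.inl k))
    {u : SIdx n m → ℝ} (hu : ∀ p, 0 < u p) {c : ℝ} (hc : 0 < c)
    (hsub : ∀ p, d p * u p + c * u p ≤ M.mulVec u p) :
    ∃ z, PosFix d M z := by
  have hne : Nonempty (SIdx n m) := ⟨Sum.inl ⟨0, hn⟩⟩
  have hne' : (Finset.univ : Finset (SIdx n m)).Nonempty := Finset.univ_nonempty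
  -- the supersolution
  set zbar : SIdx n m → ℝ := fun p =>
    Sum.casesOn p (fun _ => (1:ℝ)) (fun j => M.mulVec inlInd (Sum.inr j) / d (Sum.inr j))
    with hzbar
  have hzbar_pos : ∀ p, 0 < zbar p := by
    intro p
    cases p with
    | inl i => norm_num [hzbar]
    | inr j =>
      have h1 : 0 < M.mulVec inlInd (Sum.inr j) := by rw [mulVec_inlInd]; exact hrow j
      exact div_pos h1 (hd _)
  have hGzbar : ∀ p, Gm d M zbar p ≤ zbar p := by
    intro p
    have hzbnn : ∀ q, 0 ≤ zbar q := fun q => (hzbar_pos q).le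
    cases p with
    | inl i =>
      have ha := mulVec_nonneg hM hzbnn (Sum.inl i)
      have hden := coef_pos hd hM hzbnn (Sum.inl i)
      have h1 : zbar (Sum.inl i) = 1 := rfl
      rw [h1]
      unfold Gm
      rw [div_le_one hden, inlInd_inl]
      nlinarith [hd (Sum.inl i)]
    | inr j =>
      have hveq : M.mulVec zbar (Sum.inr j) = M.mulVec inlInd (Sum.inr j) := by
        simp only [Matrix.mulVec, dotProduct]
        apply Finset.sum_congr rfl
        intro q _
        cases q with
        | inl k =>
          rw [show zbar (Sum.inl k) = 1 from rfl, show inlInd (Sum.inl k) = (1:ℝ) from rfl]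
        | inr l => rw [hbr j l, zero_mul, zero_mul]
      unfold Gm
      rw [inlInd_inr, zero_mul, add_zero, hveq]
  -- the subsolution lo = ε • u
  have hau_pos : ∀ p, 0 < M.mulVec u p := by
    intro p
    calc (0:ℝ) < d p * u p + c * u p := by nlinarith [hd p, hu p]
    _ ≤ _ := hsub p
  set ε : ℝ := Finset.univ.inf' hne' (fun p => min (zbar p / u p) (c / M.mulVec u p)) with hε
  have hε_pos : 0 < ε := by
    rw [hε]
    apply Finset.lt_inf'_iff hne' |>.mpr
    intro p _
    exact lt_min (div_pos (hzbar_pos p) (hu p)) (div_pos hc (hau_pos p))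
  have hε_le1 : ∀ p, ε * u p ≤ zbar p := by
    intro p
    have h1 : ε ≤ zbar p / u p :=
      le_trans (Finset.inf'_le _ (Finset.mem_univ p)) (min_le_left _ _)
    rw [le_div_iff₀ (hu p)] at h1
    linarith
  have hε_le2 : ∀ p, ε * M.mulVec u p ≤ c := by
    intro p
    have h1 : ε ≤ c / M.mulVec u p :=
      le_trans (Finset.inf'_le _ (Finset.mem_univ p)) (min_le_right _ _)
    rw [le_div_iff₀ (hau_pos p)] at h1
    linarith
  set lo : SIdx n m → ℝ := fun p => ε * u p with hlo
  have hlo_pos : ∀ p, 0 < lo p := fun p => mul_pos hε_pos (hu p)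
  have hGlo : ∀ p, lo p ≤ Gm d M lo p := by
    intro p
    have hmv : M.mulVec lo p = ε * M.mulVec u p := smul_mulVec_pt ε u p
    have hlonn : ∀ q, 0 ≤ lo q := fun q => (hlo_pos q).le
    have hden := coef_pos hd hM hlonn p
    unfold Gm
    rw [le_div_iff₀ hden, hmv]
    rw [hmv] at hden
    have hind0 := inlInd_nonneg (n := n) (m := m) p
    have hind1 := inlInd_le_one (n := n) (m := m) p
    have h2 := hε_le2 p
    have h3 := hsub p
    have h4 := hau_pos p
    have h5 := hu p
    have h6 := hd p
    -- ε u (d + ind ε a_u) ≤ ε a_u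
    have key : u p * (d p + inlInd p * (ε * M.mulVec u p)) ≤ M.mulVec u p := by
      nlinarith [mul_le_mul_of_nonneg_left h2 h5.le,
        mul_nonneg (sub_nonneg.mpr hind1) (mul_nonneg (mul_nonneg hε_pos.le h4.le) h5.le)]
    calc lo p * (d p + inlInd p * (ε * M.mulVec u p))
        = ε * (u p * (d p + inlInd p * (ε * M.mulVec u p))) := by rw [hlo]; ring
      _ ≤ ε * M.mulVec u p := by
          exact mul_le_mul_of_nonneg_left key hε_pos.le
  -- the iteration
  set seq : ℕ → (SIdx n m → ℝ) := fun k => (Gm d M)^[k] zbar with hseq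
  have hseq_succ : ∀ k, seq (k + 1) = Gm d M (seq k) := by
    intro k
    rw [hseq]
    exact Function.iterate_succ_apply' _ _ _
  have hinv : ∀ k, (∀ p, lo p ≤ seq k p) ∧ (∀ p, seq (k+1) p ≤ seq k p) := by
    intro k
    induction k with
    | zero =>
      constructor
      · intro p
        have : seq 0 = zbar := rfl
        rw [this]
        exact hε_le1 p
      · intro p
        rw [hseq_succ 0]
        exact hGzbar p
    | succ k ih =>
      have h1 : ∀ p, lo p ≤ seq (k+1) p := by
        intro p
        rw [hseq_succ k]
        exact le_trans (hGlo p) (Gm_mono hd hM (fun q => (hlo_pos q).le) ih.1 p)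
      refine ⟨h1, fun p => ?_⟩
      calc seq (k+1+1) p = Gm d M (seq (k+1)) p := by rw [hseq_succ (k+1)]
        _ ≤ Gm d M (seq k) p :=
            Gm_mono hd hM (fun q => le_trans (hlo_pos q).le (h1 q)) ih.2 p
        _ = seq (k+1) p := by rw [hseq_succ k]
  have hanti : ∀ p, Antitone (fun k => seq k p) :=
    fun p => antitone_nat_of_succ_le (fun k => (hinv k).2 p)
  set zs : SIdx n m → ℝ := fun p => ⨅ k, seq k p with hzs
  have htend : ∀ p, Tendsto (fun k => seq k p) atTop (𝓝 (zs p)) := by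
    intro p
    apply tendsto_atTop_ciInf (hanti p)
    exact ⟨lo p, fun x hx => by obtain ⟨k, rfl⟩ := hx; exact (hinv k).1 p⟩
  have hzs_lo : ∀ p, lo p ≤ zs p := by
    intro p
    exact le_ciInf (fun k => (hinv k).1 p)
  have hzs_nn : ∀ p, 0 ≤ zs p := fun p => le_trans (hlo_pos p).le (hzs_lo p)
  have htendPi : Tendsto seq atTop (𝓝 zs) := tendsto_pi_nhds.mpr htend
  have hcont : ContinuousAt (Gm d M) zs := by
    apply continuousAt_pi.mpr
    intro p
    have hnum : Continuous (fun z : SIdx n m → ℝ => M.mulVec z p) := by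
      simp only [Matrix.mulVec, dotProduct]
      exact continuous_finset_sum _ fun q _ => continuous_const.mul (continuous_apply q)
    apply ContinuousAt.div hnum.continuousAt
    · exact (continuous_const.add (continuous_const.mul hnum)).continuousAt
    · exact (coef_pos hd hM hzs_nn p).ne'
  have htend2 : Tendsto (fun k => Gm d M (seq k)) atTop (𝓝 (Gm d M zs)) :=
    hcont.tendsto.comp htendPi
  have htend3 : Tendsto (fun k => Gm d M (seq k)) atTop (𝓝 zs) := by
    have heq : (fun k => Gm d M (seq k)) = fun k => seq (k + 1) := by
      funext k
      rw [hseq_succ k]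
    rw [heq]
    exact htendPi.comp (tendsto_add_atTop_nat 1)
  have hfix : Gm d M zs = zs := tendsto_nhds_unique htend2 htend3
  exact ⟨zs, fun p => lt_of_lt_of_le (hlo_pos p) (hzs_lo p),
    (Gm_fix_iff hd hM hzs_nn).mp hfix⟩

lemma matrix_spectrum_nonempty (hne : Nonempty (SIdx n m)) (M : Matrix (SIdx n m) (SIdx n m) ℝ) :
    {r : ℝ | ∃ μ ∈ spectrum ℂ (M.map fun x => (x : ℂ)), r = ‖μ‖}.Nonempty := by
  set Mc := M.map (fun x => (x : ℂ)) with hMc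
  haveI : Inhabited (SIdx n m) := ⟨hne.some⟩
  haveI hnt : Nontrivial ((SIdx n m) → ℂ) := Pi.nontrivial
  obtain ⟨μ, hμ⟩ := Module.End.exists_eigenvalue (Matrix.toLinAlgEquiv' Mc)
  have hmem : μ ∈ spectrum ℂ Mc := by
    have h1 : μ ∈ spectrum ℂ (Matrix.toLinAlgEquiv' Mc) :=
      Module.End.hasEigenvalue_iff_mem_spectrum.mp hμ
    rwa [AlgEquiv.spectrum_eq] at h1
  exact ⟨‖μ‖, μ, hmem, rfl⟩

lemma eigen_subsolution {M : Matrix (SIdx n m) (SIdx n m) ℝ}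
    (hM : ∀ p q, 0 ≤ M p q) {μ : ℂ} (hmem : μ ∈ spectrum ℂ (M.map fun x => (x : ℂ))) :
    ∃ u : SIdx n m → ℝ, (∀ p, 0 ≤ u p) ∧ u ≠ 0 ∧
      ∀ p, ‖μ‖ * u p ≤ M.mulVec u p := by
  set Mc := M.map (fun x => (x : ℂ)) with hMc
  have h1 : μ ∈ spectrum ℂ (Matrix.toLinAlgEquiv' Mc) := by
    rwa [AlgEquiv.spectrum_eq]
  have hev : Module.End.HasEigenvalue (Matrix.toLinAlgEquiv' Mc) μ :=
    Module.End.hasEigenvalue_iff_mem_spectrum.mpr h1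
  obtain ⟨v, hv⟩ := hev.exists_hasEigenvector
  have hveq : Mc.mulVec v = μ • v := by
    have := hv.apply_eq_smul
    rwa [Matrix.toLinAlgEquiv'_apply] at this
  refine ⟨fun p => ‖v p‖, fun p => norm_nonneg _, ?_, ?_⟩
  · intro hcon
    apply hv.2
    funext p
    have := congrFun hcon p
    simp only [Pi.zero_apply] at this ⊢
    exact norm_eq_zero.mp this
  · intro p
    have h2 : ‖μ‖ * ‖v p‖ = ‖(Mc.mulVec v) p‖ := by
      rw [hveq]
      simp only [Pi.smul_apply, smul_eq_mul]
      exact (norm_mul μ (v p)).symm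
    rw [h2]
    calc ‖(Mc.mulVec v) p‖
        = ‖∑ q, Mc p q * v q‖ := rfl
      _ ≤ ∑ q, ‖Mc p q * v q‖ := norm_sum_le _ _
      _ = ∑ q, M p q * ‖v q‖ := by
          apply Finset.sum_congr rfl
          intro q _
          rw [norm_mul]
          congr 1
          rw [hMc]
          simp only [Matrix.map_apply]
          rw [Complex.norm_real, Real.norm_eq_abs, abs_of_nonneg (hM p q)]
      _ = M.mulVec (fun q => ‖v q‖) p := rfl

/-- transfer of irreducibility along entrywise domination -/
lemma irred_mono {M N : Matrix (SIdx n m) (SIdx n m) ℝ} (hM : ∀ p q, 0 ≤ M p q)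
    {c : ℝ} (hc : 0 < c) (hle : ∀ p q, c * M p q ≤ N p q) (hirr : Irred M) : Irred N := by
  have hpow : ∀ k, ∀ p q, c ^ k * (M ^ k) p q ≤ (N ^ k) p q := by
    intro k
    induction k with
    | zero =>
      intro p q
      simp [pow_zero]
    | succ k ih =>
      intro p q
      rw [pow_succ, pow_succ, pow_succ]
      simp only [Matrix.mul_apply, Finset.mul_sum]
      apply Finset.sum_le_sum
      intro r _
      have h1 : 0 ≤ (M ^ k) p r := pow_entry_nonneg hM k p r
      have h2 := ih p r
      have h3 := hle r q
      have h4 := hM r q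
      have h5 : 0 ≤ (N ^ k) p r := le_trans (by positivity) h2
      calc c ^ k * c * ((M ^ k) p r * M r q)
          = (c ^ k * (M ^ k) p r) * (c * M r q) := by ring
        _ ≤ (N ^ k) p r * N r q := by
            apply mul_le_mul h2 h3 (by positivity) h5
  intro p q hpq
  obtain ⟨k, hk⟩ := hirr p q hpq
  refine ⟨k, ?_⟩
  have h1 : 0 < (M ^ k) p q := lt_of_le_of_ne (pow_entry_nonneg hM k p q) (Ne.symm hk)
  have h2 := hpow k p q
  have : 0 < (N ^ k) p q := lt_of_lt_of_le (by positivity) h2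
  exact this.ne'

/-- from a nonnegative, nonzero subsolution to a strictly positive one, using irreducibility -/
lemma pos_subsolution {M : Matrix (SIdx n m) (SIdx n m) ℝ} (hM : ∀ p q, 0 ≤ M p q)
    (hirr : Irred M) {r : ℝ} (hr : 0 ≤ r) {u : SIdx n m → ℝ} (hu : ∀ p, 0 ≤ u p)
    (hune : u ≠ 0) (hsub : ∀ p, r * u p ≤ M.mulVec u p) :
    ∃ u' : SIdx n m → ℝ, (∀ p, 0 < u' p) ∧ ∀ p, r * u' p ≤ M.mulVec u' p := by
  classical
  obtain ⟨j0, hj0⟩ : ∃ j0, 0 < u j0 := by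
    by_contra hcon
    push_neg at hcon
    exact hune (funext fun p => le_antisymm (hcon p) (hu p))
  have hchoice : ∀ p : SIdx n m, ∃ k, p ≠ j0 → (M ^ k) p j0 ≠ 0 := by
    intro p
    by_cases hp : p = j0
    · exact ⟨0, fun hcon => absurd hp hcon⟩
    · obtain ⟨k, hk⟩ := hirr p j0 hp
      exact ⟨k, fun _ => hk⟩
  set K : ℕ := Finset.univ.sup (fun p => (hchoice p).choose) with hK
  set u' : SIdx n m → ℝ := fun p => ∑ k ∈ Finset.range (K + 1), (M ^ k).mulVec u p with hu'
  have hterm_nn : ∀ k p, 0 ≤ (M ^ k).mulVec u p :=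
    fun k p => mulVec_nonneg (pow_entry_nonneg hM k) hu p
  have hterm_sub : ∀ k p, r * (M ^ k).mulVec u p ≤ (M ^ k).mulVec (M.mulVec u) p := by
    intro k p
    have h1 := mulVec_mono (pow_entry_nonneg hM k) hsub p
    calc r * (M ^ k).mulVec u p = (M ^ k).mulVec (fun q => r * u q) p :=
          (smul_mulVec_pt r u p).symm
      _ ≤ _ := h1
  refine ⟨u', ?_, ?_⟩
  · intro p
    by_cases hp : p = j0
    · subst hp
      have h0 : 0 < (M ^ 0).mulVec u p := by
        simp only [pow_zero, Matrix.one_mulVec]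
        exact hj0
      calc (0:ℝ) < (M ^ 0).mulVec u p := h0
        _ ≤ u' p := Finset.single_le_sum (fun k _ => hterm_nn k p)
            (Finset.mem_range.mpr (Nat.succ_pos K))
    · set k := (hchoice p).choose with hkdef
      have hk : (M ^ k) p j0 ≠ 0 := (hchoice p).choose_spec hp
      have hkK : k ≤ K := by
        rw [hK]
        simpa using Finset.le_sup (f := fun p => (hchoice p).choose) (Finset.mem_univ p)
      have hpos : 0 < (M ^ k) p j0 := lt_of_le_of_ne (pow_entry_nonneg hM k p j0) (Ne.symm hk)
      have hterm : 0 < (M ^ k).mulVec u p := by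
        have h1 : (M ^ k) p j0 * u j0 ≤ (M ^ k).mulVec u p := by
          simp only [Matrix.mulVec, dotProduct]
          exact Finset.single_le_sum
            (fun q _ => mul_nonneg (pow_entry_nonneg hM k p q) (hu q)) (Finset.mem_univ j0)
        exact lt_of_lt_of_le (mul_pos hpos hj0) h1
      calc (0:ℝ) < (M ^ k).mulVec u p := hterm
        _ ≤ u' p := Finset.single_le_sum (fun k' _ => hterm_nn k' p)
            (Finset.mem_range.mpr (Nat.lt_succ_of_le hkK))
  · intro p
    have h1 : r * u' p = ∑ k ∈ Finset.range (K + 1), r * (M ^ k).mulVec u p := by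
      rw [hu', Finset.mul_sum]
    have h2 : M.mulVec u' p = ∑ k ∈ Finset.range (K + 1), (M ^ k).mulVec (M.mulVec u) p := by
      rw [hu']
      have hswap : ∀ k q, (M ^ k).mulVec (M.mulVec u) q = M.mulVec ((M ^ k).mulVec u) q := by
        intro k q
        rw [Matrix.mulVec_mulVec, Matrix.mulVec_mulVec, ← pow_succ, ← pow_succ']
      simp only [hswap]
      simp only [Matrix.mulVec, dotProduct, Finset.mul_sum]
      rw [Finset.sum_comm]
    rw [h1, h2]
    exact Finset.sum_le_sum fun k _ => hterm_sub k p

lemma param_subsolution (hn : 0 < n) {h : ℝ} (hh : 0 < h) {d : SIdx n m → ℝ}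
    {A : Matrix (SIdx n m) (SIdx n m) ℝ} (hd : ∀ p, 0 < d p) (hA : ∀ p q, 0 ≤ A p q)
    (hirrA : Irred A) (hdiag : ∀ p, h * d p ≤ 1)
    (hspec : 1 < specRad (1 - h • Matrix.diagonal d + h • A)) :
    ∃ c : ℝ, 0 < c ∧ ∃ u : SIdx n m → ℝ, (∀ p, 0 < u p) ∧
      ∀ p, d p * u p + c * u p ≤ A.mulVec u p := by
  have hne : Nonempty (SIdx n m) := ⟨Sum.inl ⟨0, hn⟩⟩
  set Mfull := 1 - h • Matrix.diagonal d + h • A with hMfull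
  have hentry : ∀ p q, Mfull p q = (if p = q then 1 - h * d p else 0) + h * A p q := by
    intro p q
    rw [hMfull]
    rcases eq_or_ne p q with rfl | hpq
    · simp [Matrix.add_apply, Matrix.sub_apply, Matrix.smul_apply, Matrix.one_apply_eq,
        Matrix.diagonal_apply_eq, smul_eq_mul]
    · simp [Matrix.add_apply, Matrix.sub_apply, Matrix.smul_apply, Matrix.one_apply_ne hpq,
        Matrix.diagonal_apply_ne _ hpq, smul_eq_mul, hpq]
  have hMf_nonneg : ∀ p q, 0 ≤ Mfull p q := by
    intro p q
    rw [hentry]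
    rcases eq_or_ne p q with rfl | hpq
    · rw [if_pos rfl]
      have := hdiag p
      have := mul_nonneg hh.le (hA p p)
      linarith
    · rw [if_neg hpq, zero_add]
      exact mul_nonneg hh.le (hA p q)
  have hMf_irr : Irred Mfull := by
    apply irred_mono hA hh _ hirrA
    intro p q
    rw [hentry]
    rcases eq_or_ne p q with rfl | hpq
    · rw [if_pos rfl]
      have := hdiag p
      linarith
    · rw [if_neg hpq]
      linarith
  have hSne := matrix_spectrum_nonempty hne Mfull
  obtain ⟨r, hrS, hr1⟩ := exists_lt_of_lt_csSup hSne hspec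
  obtain ⟨μ, hμmem, rfl⟩ := hrS
  obtain ⟨u, hu_nn, hu_ne, hu_sub⟩ := eigen_subsolution hMf_nonneg hμmem
  obtain ⟨u', hu'_pos, hu'_sub⟩ :=
    pos_subsolution hMf_nonneg hMf_irr (norm_nonneg μ) hu_nn hu_ne hu_sub
  refine ⟨(‖μ‖ - 1) / h, div_pos (by linarith) hh, u', hu'_pos, ?_⟩
  intro p
  have hexp : Mfull.mulVec u' p = u' p - h * (d p * u' p) + h * A.mulVec u' p := by
    rw [hMfull, Matrix.add_mulVec, Matrix.sub_mulVec, Matrix.one_mulVec]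
    simp only [Pi.add_apply, Pi.sub_apply, Matrix.smul_mulVec, Pi.smul_apply,
      smul_eq_mul, Matrix.mulVec_diagonal]
    try ring
  have h1 := hu'_sub p
  rw [hexp] at h1
  have h2 : h * (d p * u' p + (‖μ‖ - 1) / h * u' p) ≤ h * A.mulVec u' p := by
    have hdiv : h * ((‖μ‖ - 1) / h * u' p) = (‖μ‖ - 1) * u' p := by
      field_simp
    nlinarith [hdiv, h1]
  exact le_of_mul_le_mul_left h2 hh

lemma valid_uex {d : SIdx n m → ℝ} {A : Matrix (SIdx n m) (SIdx n m) ℝ}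
    (hn : 0 < n) (hd : ∀ p, 0 < d p) (hA : ∀ p q, 0 ≤ A p q) (hirr : Irred A)
    (hbr : ∀ j l, A (Sum.inr j) (Sum.inr l) = 0)
    (hrow : ∀ j : Fin m, 0 < ∑ k, A (Sum.inr j) (Sum.inl k))
    {u : SIdx n m → ℝ} (hu : ∀ p, 0 < u p) {c : ℝ} (hc : 0 < c)
    (hsub : ∀ p, d p * u p + c * u p ≤ A.mulVec u p) :
    ∃! z, PosFix d A z := by
  obtain ⟨z, hz⟩ := exists_posfix hn hd hA hbr hrow hu hc hsub
  exact ⟨z, hz, fun y hy => posfix_unique hn hd hA hirr hy hz⟩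

/-- the equilibrium selector on nonnegative matrices -/
noncomputable def g0 (d : SIdx n m → ℝ) (A : Matrix (SIdx n m) (SIdx n m) ℝ) : SIdx n m → ℝ :=
  if H : ∃! z, PosFix d A z then H.exists.choose else 0

lemma g0_posfix {d : SIdx n m → ℝ} {A : Matrix (SIdx n m) (SIdx n m) ℝ}
    (H : ∃! z, PosFix d A z) : PosFix d A (g0 d A) := by
  rw [g0, dif_pos H]
  exact H.exists.choose_spec

lemma g0_eq {d : SIdx n m → ℝ} {A : Matrix (SIdx n m) (SIdx n m) ℝ}
    (H : ∃! z, PosFix d A z) {y : SIdx n m → ℝ} (hy : PosFix d A y) : y = g0 d A := by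
  rw [g0, dif_pos H]
  exact H.unique hy H.exists.choose_spec

/-- right-hand side for the sensitivity linear system w.r.t. the matrix entry `(p, q)` -/
noncomputable def Cvec (d : SIdx n m → ℝ) (A : Matrix (SIdx n m) (SIdx n m) ℝ)
    (p q : SIdx n m) : SIdx n m → ℝ :=
  fun r => if r = p then sat (g0 d A) p * g0 d A q else 0

/-- sensitivity vector w.r.t. the matrix entry `(p, q)` -/
noncomputable def Kv (d : SIdx n m → ℝ) (A : Matrix (SIdx n m) (SIdx n m) ℝ)
    (p q : SIdx n m) : SIdx n m → ℝ :=
  if H : ∃! v : SIdx n m → ℝ, (∀ r, Lmap d A (g0 d A) v r = Cvec d A p q r)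
  then H.exists.choose else 0

/-- the entrywise nonnegative part of a matrix -/
def Mplus (A : Matrix (SIdx n m) (SIdx n m) ℝ) : Matrix (SIdx n m) (SIdx n m) ℝ :=
  Matrix.of fun p q => max (A p q) 0

/-- the global equilibrium function -/
noncomputable def gdef (d : SIdx n m → ℝ) (A : Matrix (SIdx n m) (SIdx n m) ℝ) :
    SIdx n m → ℝ :=
  if (∀ p q, 0 ≤ A p q) then g0 d A
  else g0 d (Mplus A) + ∑ p, ∑ q, (min (A p q) 0) • Kv d (Mplus A) p q

lemma gdef_of_nonneg {d : SIdx n m → ℝ} {A : Matrix (SIdx n m) (SIdx n m) ℝ}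
    (hA : ∀ p q, 0 ≤ A p q) : gdef d A = g0 d A := if_pos hA

section Calculus

lemma hasDerivAt_aff (c b t0 : ℝ) : HasDerivAt (fun t => c + b * t) b t0 := by
  simpa using ((hasDerivAt_id t0).const_mul b).const_add c

lemma hasDerivAt_quad (a0 a1 a2 : ℝ) : HasDerivAt (fun t => a0 + a1 * t + a2 * t ^ 2) a1 0 := by
  have h1 : HasDerivAt (fun t : ℝ => t ^ 2) (2 * (0:ℝ) ^ 1) 0 := hasDerivAt_pow 2 (0:ℝ)
  have h2 := (hasDerivAt_aff a0 a1 0).add (h1.const_mul a2)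
  have h3 : (fun t : ℝ => a0 + a1 * t + a2 * t ^ 2) = (fun t => a0 + a1 * t) + fun y => a2 * y ^ 2 :=
    rfl
  rw [h3]
  simpa using h2

variable (d0 Δd : SIdx n m → ℝ) (M0 ΔM : Matrix (SIdx n m) (SIdx n m) ℝ)

noncomputable def Ffun (x : ℝ × (SIdx n m → ℝ)) : SIdx n m → ℝ :=
  fun p => (d0 p + x.1 * Δd p) * x.2 p - sat x.2 p * ((M0 + x.1 • ΔM).mulVec x.2) p

noncomputable def Phi (x : ℝ × (SIdx n m → ℝ)) : ℝ × (SIdx n m → ℝ) :=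
  (x.1, Ffun d0 Δd M0 ΔM x)

lemma mulVec_entry_expand (a : ℝ) (z : SIdx n m → ℝ) (p : SIdx n m) :
    ((M0 + a • ΔM).mulVec z) p = M0.mulVec z p + a * ΔM.mulVec z p := by
  rw [Matrix.add_mulVec]
  simp only [Pi.add_apply, Matrix.smul_mulVec, Pi.smul_apply, smul_eq_mul]

lemma mulVec_arg_expand (M : Matrix (SIdx n m) (SIdx n m) ℝ) (t : ℝ) (z w : SIdx n m → ℝ)
    (p : SIdx n m) : (M.mulVec (z + t • w)) p = M.mulVec z p + t * M.mulVec w p := by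
  rw [Matrix.mulVec_add, Matrix.mulVec_smul]
  simp only [Pi.add_apply, Pi.smul_apply, smul_eq_mul]

lemma Phi_contDiff : ContDiff ℝ 1 (Phi d0 Δd M0 ΔM) := by
  apply ContDiff.prodMk contDiff_fst
  apply contDiff_pi.mpr
  intro p
  have hproj : ∀ q, ContDiff ℝ 1 (fun x : ℝ × (SIdx n m → ℝ) => x.2 q) :=
    fun q => contDiff_pi.mp contDiff_snd q
  have hmv : ContDiff ℝ 1 (fun x : ℝ × (SIdx n m → ℝ) => ((M0 + x.1 • ΔM).mulVec x.2) p) := by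
    have hexp : (fun x : ℝ × (SIdx n m → ℝ) => ((M0 + x.1 • ΔM).mulVec x.2) p)
        = fun x => ∑ q, (M0 p q + x.1 * ΔM p q) * x.2 q := by
      funext x
      simp only [Matrix.mulVec, dotProduct, Matrix.add_apply, Matrix.smul_apply,
        smul_eq_mul]
    rw [hexp]
    apply ContDiff.sum
    intro q _
    exact (contDiff_const.add (contDiff_fst.mul contDiff_const)).mul (hproj q)
  show ContDiff ℝ 1 fun x => Ffun d0 Δd M0 ΔM x p
  unfold Ffun
  apply ContDiff.sub
  · exact (contDiff_const.add (contDiff_fst.mul contDiff_const)).mul (hproj p)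
  · unfold sat
    exact (contDiff_const.sub (contDiff_const.mul (hproj p))).mul hmv

/-- explicit directional derivative of `Phi` -/
noncomputable def DPhi (x0 u : ℝ × (SIdx n m → ℝ)) : ℝ × (SIdx n m → ℝ) :=
  (u.1, fun p =>
    u.1 * Δd p * x0.2 p + (d0 p + x0.1 * Δd p) * u.2 p
      + inlInd p * u.2 p * ((M0 + x0.1 • ΔM).mulVec x0.2) p
      - sat x0.2 p * (((M0 + x0.1 • ΔM).mulVec u.2) p + u.1 * (ΔM.mulVec x0.2) p))

lemma line_curve (E : Type*) [NormedAddCommGroup E] [NormedSpace ℝ E] (x0 u : E) :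
    HasDerivAt (fun t : ℝ => x0 + t • u) u 0 := by
  simpa using ((hasDerivAt_id (0:ℝ)).smul_const u).const_add x0

lemma Phi_line_deriv (x0 u : ℝ × (SIdx n m → ℝ)) :
    HasDerivAt (fun t : ℝ => Phi d0 Δd M0 ΔM (x0 + t • u)) (DPhi d0 Δd M0 ΔM x0 u) 0 := by
  apply HasDerivAt.prodMk
  · -- first component : t ↦ x0.1 + t * u.1
    have : (fun t : ℝ => (x0 + t • u).1) = fun t => x0.1 + u.1 * t := by
      funext t
      simp [Prod.fst_add, Prod.smul_fst, smul_eq_mul, mul_comm]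
    rw [this]
    exact hasDerivAt_aff x0.1 u.1 0
  · apply hasDerivAt_pi.mpr
    intro p
    set z := x0.2 with hz
    set w := u.2 with hw
    set a0 : ℝ := M0.mulVec z p + x0.1 * ΔM.mulVec z p with ha0
    set a1 : ℝ := (M0.mulVec w p + x0.1 * ΔM.mulVec w p) + u.1 * ΔM.mulVec z p with ha1
    set a2 : ℝ := u.1 * ΔM.mulVec w p with ha2
    have hfun : (fun t => Ffun d0 Δd M0 ΔM (x0 + t • u) p)
        = fun t => ((d0 p + x0.1 * Δd p) + (u.1 * Δd p) * t) * (z p + w p * t)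
          - ((sat z p) + (-(inlInd p * w p)) * t) * (a0 + a1 * t + a2 * t ^ 2) := by
      funext t
      unfold Ffun
      have h1 : (x0 + t • u).1 = x0.1 + t * u.1 := by
        simp [Prod.fst_add, Prod.smul_fst, smul_eq_mul]
      have h2 : (x0 + t • u).2 = z + t • w := by
        simp [Prod.snd_add, Prod.smul_snd, hz, hw]
      rw [h1, h2]
      have h3 : ((M0 + (x0.1 + t * u.1) • ΔM).mulVec (z + t • w)) p
          = a0 + a1 * t + a2 * t ^ 2 := by
        rw [mulVec_entry_expand, mulVec_arg_expand, mulVec_arg_expand, ha0, ha1, ha2]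
        ring
      rw [h3]
      have h4 : sat (z + t • w) p = sat z p + (-(inlInd p * w p)) * t := by
        unfold sat
        simp only [Pi.add_apply, Pi.smul_apply, smul_eq_mul]
        ring
      rw [h4]
      have h5 : (z + t • w) p = z p + w p * t := by
        simp only [Pi.add_apply, Pi.smul_apply, smul_eq_mul]
        ring
      rw [h5]
      ring
    rw [hfun]
    have hP := hasDerivAt_aff (d0 p + x0.1 * Δd p) (u.1 * Δd p) 0
    have hQ : HasDerivAt (fun t : ℝ => z p + w p * t) (w p) 0 := hasDerivAt_aff _ _ 0
    have hS : HasDerivAt (fun t : ℝ => sat z p + (-(inlInd p * w p)) * t)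
        (-(inlInd p * w p)) 0 := hasDerivAt_aff _ _ 0
    have hR := hasDerivAt_quad a0 a1 a2
    have hall := (hP.mul hQ).sub (hS.mul hR)
    convert hall using 1
    show (DPhi d0 Δd M0 ΔM x0 u).2 p = _
    unfold DPhi
    simp only
    rw [mulVec_entry_expand (M0 := M0) (ΔM := ΔM) x0.1 z p,
      mulVec_entry_expand (M0 := M0) (ΔM := ΔM) x0.1 w p, ha0, ha1]
    ring
    · rfl

end Calculus

lemma ift_package (hn : 0 < n)
    (d0 Δd : SIdx n m → ℝ) (M0 ΔM : Matrix (SIdx n m) (SIdx n m) ℝ) (s0 : ℝ)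
    (hd : ∀ p, 0 < d0 p + s0 * Δd p)
    (hM : ∀ p q, 0 ≤ (M0 + s0 • ΔM) p q)
    (hirr : Irred (M0 + s0 • ΔM))
    {zs : SIdx n m → ℝ} (hzs : PosFix (fun p => d0 p + s0 * Δd p) (M0 + s0 • ΔM) zs) :
    ∃ V : SIdx n m → ℝ,
      (∀ r, Lmap (fun p => d0 p + s0 * Δd p) (M0 + s0 • ΔM) zs V r
        = -Δd r * zs r + sat zs r * ΔM.mulVec zs r) ∧
      ∃ ψ : ℝ → (SIdx n m → ℝ), ψ s0 = zs ∧ HasDerivAt ψ V s0 ∧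
        (∀ᶠ s in 𝓝 s0, (∀ p, 0 < ψ s p) ∧
          EqFix (fun p => d0 p + s * Δd p) (M0 + s • ΔM) (ψ s)) := by
  have hne : Nonempty (SIdx n m) := ⟨Sum.inl ⟨0, hn⟩⟩
  have hsmooth := Phi_contDiff d0 Δd M0 ΔM
  have hstrict : HasStrictFDerivAt (Phi d0 Δd M0 ΔM)
      (fderiv ℝ (Phi d0 Δd M0 ΔM) (s0, zs)) (s0, zs) :=
    (hsmooth.contDiffAt).hasStrictFDerivAt (by simp)
  have hfd : ∀ u, fderiv ℝ (Phi d0 Δd M0 ΔM) (s0, zs) u = DPhi d0 Δd M0 ΔM (s0, zs) u := by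
    intro u
    have hline := line_curve (ℝ × (SIdx n m → ℝ)) (s0, zs) u
    have h2 : ((s0, zs) : ℝ × (SIdx n m → ℝ)) = (fun t : ℝ => (s0, zs) + t • u) 0 := by simp
    have h1' : HasFDerivAt (Phi d0 Δd M0 ΔM) (fderiv ℝ (Phi d0 Δd M0 ΔM) (s0, zs))
        ((fun t : ℝ => (s0, zs) + t • u) 0) := h2 ▸ hstrict.hasFDerivAt
    have h3 := h1'.comp_hasDerivAt 0 hline
    exact h3.unique (Phi_line_deriv d0 Δd M0 ΔM (s0, zs) u)
  have hker : ∀ u : ℝ × (SIdx n m → ℝ), DPhi d0 Δd M0 ΔM (s0, zs) u = 0 → u = 0 := by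
    intro u hu
    have h1 : u.1 = 0 := congrArg Prod.fst hu
    have h2 : ∀ p, (DPhi d0 Δd M0 ΔM (s0, zs) u).2 p = 0 :=
      fun p => congrFun (congrArg Prod.snd hu) p
    have h3 : ∀ p, Lmap (fun p => d0 p + s0 * Δd p) (M0 + s0 • ΔM) zs u.2 p = 0 := by
      intro p
      have h4 := h2 p
      simp only [DPhi] at h4
      rw [h1] at h4
      unfold Lmap
      linear_combination h4
    have h5 : u.2 = 0 := Lmap_inj hn hd hM hirr hzs h3
    exact Prod.ext h1 h5
  have hLinj : Function.Injective (fderiv ℝ (Phi d0 Δd M0 ΔM) (s0, zs)) := by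
    intro u v huv
    have h1 : fderiv ℝ (Phi d0 Δd M0 ΔM) (s0, zs) (u - v) = 0 := by
      rw [map_sub, huv, sub_self]
    rw [hfd] at h1
    exact sub_eq_zero.mp (hker _ h1)
  have hLsurj : Function.Surjective (fderiv ℝ (Phi d0 Δd M0 ΔM) (s0, zs)) :=
    LinearMap.injective_iff_surjective.mp hLinj
  set eL : (ℝ × (SIdx n m → ℝ)) ≃L[ℝ] (ℝ × (SIdx n m → ℝ)) :=
    (LinearEquiv.ofBijective ((fderiv ℝ (Phi d0 Δd M0 ΔM) (s0, zs) : _ →ₗ[ℝ] _))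
      ⟨hLinj, hLsurj⟩).toContinuousLinearEquiv with heL
  have hcoe : (eL : (ℝ × (SIdx n m → ℝ)) →L[ℝ] (ℝ × (SIdx n m → ℝ)))
      = fderiv ℝ (Phi d0 Δd M0 ΔM) (s0, zs) := ContinuousLinearMap.ext fun u => rfl
  have hstrict' : HasStrictFDerivAt (Phi d0 Δd M0 ΔM)
      (eL : (ℝ × (SIdx n m → ℝ)) →L[ℝ] (ℝ × (SIdx n m → ℝ))) (s0, zs) := by
    rw [hcoe]
    exact hstrict
  set linv := hstrict'.localInverse (Phi d0 Δd M0 ΔM) eL (s0, zs) with hlinv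
  have hPhix0 : Phi d0 Δd M0 ΔM (s0, zs) = (s0, 0) := by
    unfold Phi
    refine Prod.ext rfl ?_
    show Ffun d0 Δd M0 ΔM (s0, zs) = 0
    funext p
    have h1 := hzs.2 p
    simp only [Ffun, Pi.zero_apply]
    linear_combination h1
  have hev1 : ∀ᶠ s in 𝓝 s0, Phi d0 Δd M0 ΔM (linv (s, 0)) = (s, 0) := by
    have hc : Tendsto (fun s : ℝ => ((s, 0) : ℝ × (SIdx n m → ℝ))) (𝓝 s0) (𝓝 (s0, 0)) :=
      (continuous_id.prodMk continuous_const).tendsto s0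
    have h1 := hstrict'.eventually_right_inverse
    rw [hPhix0] at h1
    exact hc.eventually h1
  set ψ : ℝ → (SIdx n m → ℝ) := fun s => (linv (s, 0)).2 with hψdef
  have hev2 : ∀ᶠ s in 𝓝 s0, linv (s, 0) = (s, ψ s) := by
    filter_upwards [hev1] with s hs
    have h1 : (linv (s, 0)).1 = s := congrArg Prod.fst hs
    exact Prod.ext h1 rfl
  have hev3 : ∀ᶠ s in 𝓝 s0, EqFix (fun p => d0 p + s * Δd p) (M0 + s • ΔM) (ψ s) := by
    filter_upwards [hev1, hev2] with s h1 h2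
    rw [h2] at h1
    intro p
    have h3 : Ffun d0 Δd M0 ΔM (s, ψ s) p = 0 := congrFun (congrArg Prod.snd h1) p
    simp only [Ffun] at h3
    show (d0 p + s * Δd p) * ψ s p = sat (ψ s) p * ((M0 + s • ΔM).mulVec (ψ s)) p
    linear_combination h3
  have hψ0 : ψ s0 = zs := by
    have h1 : linv (Phi d0 Δd M0 ΔM (s0, zs)) = (s0, zs) := hstrict'.localInverse_apply_image
    rw [hPhix0] at h1
    show (linv (s0, 0)).2 = zs
    rw [h1]
  have hinvd := hstrict'.to_localInverse
  rw [hPhix0] at hinvd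
  have hcurve : HasDerivAt (fun s : ℝ => ((s, 0) : ℝ × (SIdx n m → ℝ)))
      ((1:ℝ), (0 : SIdx n m → ℝ)) s0 :=
    (hasDerivAt_id s0).prodMk (hasDerivAt_const s0 0)
  have hlc : HasDerivAt (fun s => linv (s, 0)) (eL.symm ((1:ℝ), (0 : SIdx n m → ℝ))) s0 :=
    by have h := hinvd.hasFDerivAt.comp_hasDerivAt s0 hcurve; exact h
  set W := eL.symm ((1:ℝ), (0 : SIdx n m → ℝ)) with hW
  have hψd : HasDerivAt ψ W.2 s0 :=
    (ContinuousLinearMap.snd ℝ ℝ (SIdx n m → ℝ)).hasFDerivAt.comp_hasDerivAt s0 hlc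
  have hWid : DPhi d0 Δd M0 ΔM (s0, zs) W = ((1:ℝ), (0 : SIdx n m → ℝ)) := by
    rw [← hfd W]
    have h1 : eL W = ((1:ℝ), (0 : SIdx n m → ℝ)) := eL.apply_symm_apply _
    rw [← hcoe]
    exact h1
  have hW1 : W.1 = 1 := congrArg Prod.fst hWid
  have hLmapV : ∀ r, Lmap (fun p => d0 p + s0 * Δd p) (M0 + s0 • ΔM) zs W.2 r
      = -Δd r * zs r + sat zs r * ΔM.mulVec zs r := by
    intro r
    have h2 : (DPhi d0 Δd M0 ΔM (s0, zs) W).2 r = 0 := by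
      rw [hWid]
      rfl
    simp only [DPhi] at h2
    rw [hW1] at h2
    unfold Lmap
    linear_combination h2
  have hev4 : ∀ᶠ s in 𝓝 s0, ∀ p, 0 < ψ s p := by
    rw [eventually_all]
    intro p
    have hcont : ContinuousAt (fun s => ψ s p) s0 :=
      (continuous_apply p).continuousAt.comp hψd.continuousAt
    have hpos : 0 < ψ s0 p := by rw [hψ0]; exact hzs.1 p
    exact hcont.eventually (eventually_gt_nhds hpos)
  refine ⟨W.2, hLmapV, ψ, hψ0, hψd, ?_⟩
  filter_upwards [hev3, hev4] with s h3 h4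
  exact ⟨h4, h3⟩

lemma glue_deriv (f ψi : ℝ → ℝ) (v : ℝ) (hψ : HasDerivAt ψi v 0) (hf0 : f 0 = ψi 0)
    (hright : ∀ᶠ s in 𝓝[>] (0:ℝ), f s = ψi s)
    (hleft : ∀ s < (0:ℝ), f s = f 0 + s * v) : HasDerivAt f v 0 := by
  rw [hasDerivAt_iff_tendsto_slope]
  rw [hasDerivAt_iff_tendsto_slope] at hψ
  rw [← nhdsLT_sup_nhdsGT, tendsto_sup]
  constructor
  · -- left part : slope is exactly v
    apply Tendsto.congr' _ tendsto_const_nhds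
    filter_upwards [self_mem_nhdsWithin] with s hs
    have hs0 : s < 0 := hs
    rw [slope_def_field, hleft s hs0]
    have hsne : s ≠ 0 := ne_of_lt hs0
    field_simp
    ring
  · -- right part
    have hmono : 𝓝[>] (0:ℝ) ≤ 𝓝[≠] (0:ℝ) :=
      nhdsWithin_mono 0 (fun x hx => ne_of_gt hx)
    apply Tendsto.congr' _ (hψ.mono_left hmono)
    filter_upwards [hright] with s hs
    rw [slope_def_field, slope_def_field, hs, hf0]

lemma clause4 (hn : 0 < n) {d : SIdx n m → ℝ} {A : Matrix (SIdx n m) (SIdx n m) ℝ}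
    (hd : ∀ p, 0 < d p) (hA : ∀ p q, 0 ≤ A p q) (hirr : Irred A)
    (hbr : ∀ j l, A (Sum.inr j) (Sum.inr l) = 0)
    (hrow : ∀ j : Fin m, 0 < ∑ k, A (Sum.inr j) (Sum.inl k))
    {u : SIdx n m → ℝ} (hu : ∀ p, 0 < u p) {c : ℝ} (hc : 0 < c)
    (hsub : ∀ p, d p * u p + c * u p ≤ A.mulVec u p) (i : SIdx n m) :
    ∃ v : ℝ, v < 0 ∧ HasDerivAt (fun s => gdef (Function.update d i s) A i) v (d i) := by
  classical
  set d0 : SIdx n m → ℝ := Function.update d i 0 with hd0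
  set Δd : SIdx n m → ℝ := Pi.single i 1 with hΔd
  set s0 : ℝ := d i with hs0r
  have hline : ∀ s : ℝ, (fun p => d0 p + s * Δd p) = Function.update d i s := by
    intro s
    funext p
    by_cases hp : p = i
    · subst hp
      simp [hd0, hΔd, Function.update_self, Pi.single_eq_same]
    · simp [hd0, hΔd, Function.update_of_ne hp, Pi.single_eq_of_ne hp]
  have hline0 : (fun p => d0 p + s0 * Δd p) = d := by
    rw [hline s0, hs0r, Function.update_eq_self]
  have hM0 : ∀ s : ℝ, A + s • (0 : Matrix (SIdx n m) (SIdx n m) ℝ) = A := by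
    intro s
    simp
  have HUex : ∃! z, PosFix d A z := valid_uex hn hd hA hirr hbr hrow hu hc hsub
  have hzsPF : PosFix d A (g0 d A) := g0_posfix HUex
  set zs := g0 d A with hzsdef
  have hd' : ∀ p, 0 < d0 p + s0 * Δd p := by
    intro p
    rw [show d0 p + s0 * Δd p = d p from congrFun hline0 p]
    exact hd p
  have hM' : ∀ p q, 0 ≤ (A + s0 • (0 : Matrix (SIdx n m) (SIdx n m) ℝ)) p q := by
    rw [hM0]
    exact hA
  have hirr' : Irred (A + s0 • (0 : Matrix (SIdx n m) (SIdx n m) ℝ)) := by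
    rw [hM0]
    exact hirr
  have hzs' : PosFix (fun p => d0 p + s0 * Δd p)
      (A + s0 • (0 : Matrix (SIdx n m) (SIdx n m) ℝ)) zs := by
    rw [hline0, hM0]
    exact hzsPF
  obtain ⟨V, hLV, ψ, hψ0, hψd, hev⟩ := ift_package hn d0 Δd A 0 s0 hd' hM' hirr' hzs'
  -- sign of V i
  have hLV' : ∀ r, Lmap d A zs V r = (if r = i then -zs i else 0) := by
    intro r
    have h1 := hLV r
    rw [hline0, hM0] at h1
    rw [h1, Matrix.zero_mulVec]
    simp only [Pi.zero_apply, mul_zero, add_zero]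
    by_cases hr : r = i
    · subst hr
      rw [if_pos rfl, hΔd, Pi.single_eq_same]
      ring
    · rw [if_neg hr, hΔd, Pi.single_eq_of_ne hr]
      ring
  have hVi : V i < 0 :=
    Lmap_sign_neg hn hd hA hirr hzsPF (by nlinarith [hzsPF.1 i] : -zs i < 0) hLV'
  -- validity of nearby parameters
  have hval : ∀ᶠ s in 𝓝 s0, ∃! z, PosFix (Function.update d i s) A z := by
    rw [Metric.eventually_nhds_iff]
    have hs0pos : 0 < s0 := hd i
    refine ⟨min (s0 / 2) (c / 2), by positivity, ?_⟩
    intro s hs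
    rw [Real.dist_eq] at hs
    have h1 : |s - s0| < s0 / 2 := lt_of_lt_of_le hs (min_le_left _ _)
    have h2 : |s - s0| < c / 2 := lt_of_lt_of_le hs (min_le_right _ _)
    rw [abs_lt] at h1 h2
    have hdnew : ∀ p, 0 < Function.update d i s p := by
      intro p
      by_cases hp : p = i
      · subst hp
        rw [Function.update_self]
        linarith [h1.1]
      · rw [Function.update_of_ne hp]
        exact hd p
    refine valid_uex hn hdnew hA hirr hbr hrow hu (c := c / 2) (by linarith) ?_
    intro p
    by_cases hp : p = i
    · subst hp
      rw [Function.update_self]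
      have h3 := hsub p
      rw [← hs0r] at h3
      nlinarith [hu p, mul_le_mul_of_nonneg_right (le_of_lt h2.2) (hu p).le]
    · rw [Function.update_of_ne hp]
      have h3 := hsub p
      nlinarith [hu p]
  have hmatch : (fun s => gdef (Function.update d i s) A) =ᶠ[𝓝 s0] ψ := by
    filter_upwards [hval, hev] with s h1 h2
    have hpf : PosFix (Function.update d i s) A (ψ s) := by
      refine ⟨h2.1, ?_⟩
      have h3 := h2.2
      rwa [hline s, hM0 s] at h3
    rw [gdef_of_nonneg hA]
    exact (g0_eq h1 hpf).symm
  refine ⟨V i, hVi, ?_⟩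
  have hψi : HasDerivAt (fun s => ψ s i) (V i) s0 := hasDerivAt_pi.mp hψd i
  apply hψi.congr_of_eventuallyEq
  filter_upwards [hmatch] with s hs
  rw [hs]

lemma std_mulVec (i j : SIdx n m) (z : SIdx n m → ℝ) (r : SIdx n m) :
    (Matrix.single i j (1:ℝ)).mulVec z r = if r = i then z j else 0 := by
  by_cases hr : r = i
  · subst hr
    rw [if_pos rfl]
    simp [Matrix.mulVec, dotProduct, Matrix.single, Finset.sum_ite_eq,
      ite_and]
  · rw [if_neg hr]
    have h1 : ∀ q, Matrix.single i j (1:ℝ) r q = 0 := by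
      intro q
      simp only [Matrix.single, Matrix.of_apply, ite_eq_right_iff, and_imp]
      intro hir _
      exact absurd hir.symm hr
    simp [Matrix.mulVec, dotProduct, h1]

lemma Mline_entry (A : Matrix (SIdx n m) (SIdx n m) ℝ) (i j : SIdx n m) (s : ℝ)
    (p q : SIdx n m) :
    (((A - A i j • Matrix.single i j (1:ℝ)) + s • Matrix.single i j 1 :
        Matrix (SIdx n m) (SIdx n m) ℝ)) p q
      = if p = i ∧ q = j then s else A p q := by
  simp only [Matrix.add_apply, Matrix.sub_apply, Matrix.smul_apply, smul_eq_mul,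
    Matrix.single, Matrix.of_apply]
  by_cases hp : p = i
  · by_cases hq : q = j
    · subst hp; subst hq
      simp
    · subst hp
      have h1 : ¬(p = p ∧ j = q) := fun hcon => hq hcon.2.symm
      have h2 : ¬(p = p ∧ q = j) := fun hcon => hq hcon.2
      rw [if_neg h1, if_neg h2]
      ring
  · have h1 : ¬(i = p ∧ j = q) := fun hcon => hp hcon.1.symm
    have h2 : ¬(p = i ∧ q = j) := fun hcon => hp hcon.1
    rw [if_neg h1, if_neg h2]
    ring

lemma Mline_eq_updateRow (A : Matrix (SIdx n m) (SIdx n m) ℝ) (i j : SIdx n m) (s : ℝ) :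
    ((A - A i j • Matrix.single i j (1:ℝ)) + s • Matrix.single i j 1)
      = Matrix.updateRow A i (Function.update (A i) j s) := by
  ext p q
  rw [Mline_entry, Matrix.updateRow_apply, Function.update_apply]
  by_cases hp : p = i
  · by_cases hq : q = j
    · simp [hp, hq]
    · simp [hp, hq]
  · simp [hp]

lemma clause5 (hn : 0 < n) {d : SIdx n m → ℝ} {A : Matrix (SIdx n m) (SIdx n m) ℝ}
    (hd : ∀ p, 0 < d p) (hA : ∀ p q, 0 ≤ A p q) (hirr : Irred A)
    (hbr : ∀ j' l, A (Sum.inr j') (Sum.inr l) = 0)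
    (hrow : ∀ j' : Fin m, 0 < ∑ k, A (Sum.inr j') (Sum.inl k))
    {u : SIdx n m → ℝ} (hu : ∀ p, 0 < u p) {c : ℝ} (hc : 0 < c)
    (hsub : ∀ p, d p * u p + c * u p ≤ A.mulVec u p)
    (i j : SIdx n m) (hsplit : i.isLeft = true ∨ j.isLeft = true) :
    ∃ v : ℝ, 0 < v ∧ HasDerivAt
      (fun s => gdef d (Matrix.updateRow A i (Function.update (A i) j s)) i) v (A i j) := by
  classical
  set std : Matrix (SIdx n m) (SIdx n m) ℝ := Matrix.single i j 1 with hstd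
  set s0 : ℝ := A i j with hs0r
  set M0 : Matrix (SIdx n m) (SIdx n m) ℝ := A - s0 • std with hM0def
  set Δd : SIdx n m → ℝ := fun _ => 0 with hΔd
  have hs0nn : 0 ≤ s0 := hA i j
  have hline : ∀ s : ℝ, (fun p => d p + s * Δd p) = d := by
    intro s; funext p; simp [hΔd]
  have hent : ∀ (s : ℝ) p q, (M0 + s • std) p q = if p = i ∧ q = j then s else A p q := by
    intro s p q
    rw [hM0def, hstd, hs0r]
    exact Mline_entry A i j s p q
  have hMs : ∀ s : ℝ, M0 + s • std = Matrix.updateRow A i (Function.update (A i) j s) := by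
    intro s
    rw [hM0def, hstd, hs0r]
    exact Mline_eq_updateRow A i j s
  have hM0A : M0 + s0 • std = A := by
    ext p q
    rw [hent]
    by_cases hpq : p = i ∧ q = j
    · rw [if_pos hpq, hs0r, hpq.1, hpq.2]
    · rw [if_neg hpq]
  have HUex : ∃! z, PosFix d A z := valid_uex hn hd hA hirr hbr hrow hu hc hsub
  set zs := g0 d A with hzsdef
  have hzsPF : PosFix d A zs := g0_posfix HUex
  have hd' : ∀ p, 0 < d p + s0 * Δd p := by
    intro p; rw [show d p + s0 * Δd p = d p from congrFun (hline s0) p]; exact hd p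
  have hM' : ∀ p q, 0 ≤ (M0 + s0 • std) p q := by rw [hM0A]; exact hA
  have hirr' : Irred (M0 + s0 • std) := by rw [hM0A]; exact hirr
  have hzs' : PosFix (fun p => d p + s0 * Δd p) (M0 + s0 • std) zs := by
    rw [hline s0, hM0A]; exact hzsPF
  obtain ⟨V, hLV, ψ, hψ0, hψd, hev⟩ := ift_package hn d Δd M0 std s0 hd' hM' hirr' hzs'
  have hsatpos : 0 < sat zs i := (posfix_facts hd hA hzsPF i).2
  have hβ : 0 < sat zs i * zs j := mul_pos hsatpos (hzsPF.1 j)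
  have hLV' : ∀ r, Lmap d A zs V r = (if r = i then sat zs i * zs j else 0) := by
    intro r
    have h1 := hLV r
    rw [hline s0, hM0A] at h1
    rw [h1, hstd, std_mulVec, hΔd]
    by_cases hr : r = i
    · rw [if_pos hr, if_pos hr, hr]
      ring
    · rw [if_neg hr, if_neg hr]
      ring
  have hVi : 0 < V i := Lmap_sign_pos hn hd hA hirr hzsPF hβ hLV'
  have hAs : ∀ s : ℝ, 0 ≤ s → ∀ p q, 0 ≤ (M0 + s • std) p q := by
    intro s hs p q
    rw [hent]
    by_cases hpq : p = i ∧ q = j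
    · rw [if_pos hpq]; exact hs
    · rw [if_neg hpq]; exact hA p q
  have hirrs : ∀ s : ℝ, 0 < s → Irred (M0 + s • std) := by
    intro s hs
    refine irred_mono hA (c := min 1 (s / (s0 + 1))) (lt_min one_pos
      (div_pos hs (by linarith))) ?_ hirr
    intro p q
    rw [hent]
    by_cases hpq : p = i ∧ q = j
    · rw [if_pos hpq]
      have hAij : A p q = s0 := by rw [hpq.1, hpq.2, ← hs0r]
      rw [hAij]
      have h1 : min 1 (s / (s0 + 1)) ≤ s / (s0 + 1) := min_le_right _ _
      have h3 : s / (s0 + 1) * s0 ≤ s := by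
        rw [div_mul_eq_mul_div, div_le_iff₀ (by linarith : (0:ℝ) < s0 + 1)]
        nlinarith
      nlinarith [mul_le_mul_of_nonneg_right h1 hs0nn]
    · rw [if_neg hpq]
      have h1 : min 1 (s / (s0 + 1)) ≤ 1 := min_le_left _ _
      nlinarith [hA p q]
  have hbrs : ∀ s : ℝ, ∀ j' l, (M0 + s • std) (Sum.inr j') (Sum.inr l) = 0 := by
    intro s j' l
    rw [hent]
    have hno : ¬((Sum.inr j' : SIdx n m) = i ∧ (Sum.inr l : SIdx n m) = j) := by
      rintro ⟨h1, h2⟩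
      rcases hsplit with hsp | hsp
      · rw [← h1] at hsp; simp at hsp
      · rw [← h2] at hsp; simp at hsp
    rw [if_neg hno]
    exact hbr j' l
  have hrows : ∀ s : ℝ, 0 < s →
      ∀ j' : Fin m, 0 < ∑ k, (M0 + s • std) (Sum.inr j') (Sum.inl k) := by
    intro s hs j'
    apply Finset.sum_pos'
    · intro k _
      exact hAs s hs.le (Sum.inr j') (Sum.inl k)
    · by_cases hi : (Sum.inr j' : SIdx n m) = i
      · have hjl : j.isLeft = true := by
          rcases hsplit with hsp | hsp
          · rw [← hi] at hsp; simp at hsp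
          · exact hsp
        obtain ⟨k0, hk0⟩ := Sum.isLeft_iff.mp hjl
        refine ⟨k0, Finset.mem_univ k0, ?_⟩
        rw [hent, if_pos ⟨hi, hk0.symm⟩]
        exact hs
      · obtain ⟨k1, _, hk1⟩ := Finset.exists_lt_of_sum_lt
          (show ∑ k : Fin n, (0:ℝ) < ∑ k, A (Sum.inr j') (Sum.inl k) by
            simpa using hrow j')
        refine ⟨k1, Finset.mem_univ k1, ?_⟩
        rw [hent, if_neg (fun hcon => hi hcon.1)]
        exact hk1
  set εsub : ℝ := c * u i / (2 * u j + 1) with hεsub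
  have hεsub_pos : 0 < εsub := by
    rw [hεsub]
    have h1 := hu i
    have h2 := hu j
    positivity
  have hsubs : ∀ s : ℝ, |s - s0| ≤ εsub → ∀ p,
      d p * u p + c / 2 * u p ≤ (M0 + s • std).mulVec u p := by
    intro s hs p
    have hmv : (M0 + s • std).mulVec u p
        = A.mulVec u p + (s - s0) * (if p = i then u j else 0) := by
      have h1 : M0 + s • std = A + (s - s0) • std := by
        rw [hM0def]
        ext p' q'
        simp only [Matrix.add_apply, Matrix.sub_apply, Matrix.smul_apply, smul_eq_mul]
        ring
      rw [h1, Matrix.add_mulVec]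
      simp only [Pi.add_apply, Matrix.smul_mulVec, Pi.smul_apply, smul_eq_mul]
      rw [hstd, std_mulVec]
    rw [hmv]
    by_cases hp : p = i
    · rw [if_pos hp, hp]
      have h4 : εsub * u j ≤ c * u i / 2 := by
        rw [hεsub, div_mul_eq_mul_div, div_le_div_iff₀ (by nlinarith [hu j]) (by norm_num)]
        nlinarith [hu i, hu j]
      have h3 : |s - s0| * u j ≤ c * u i / 2 :=
        le_trans (mul_le_mul_of_nonneg_right hs (hu j).le) h4
      have h5 : -(c * u i / 2) ≤ (s - s0) * u j := by
        have h6 := mul_le_mul_of_nonneg_right (neg_abs_le (s - s0)) (hu j).le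
        nlinarith
      nlinarith [hsub i, hu i]
    · rw [if_neg hp]
      nlinarith [hu p, hsub p]
  rcases eq_or_lt_of_le hs0nn with hzero | hpos
  · -- boundary case s0 = 0 : one-sided gluing
    have hs00 : s0 = 0 := hzero.symm
    have hVspec : ∀ r, Lmap d A (g0 d A) V r = Cvec d A i j r := by
      intro r
      unfold Cvec
      rw [← hzsdef]
      exact hLV' r
    have HK : ∃! v : SIdx n m → ℝ, (∀ r, Lmap d A (g0 d A) v r = Cvec d A i j r) := by
      refine ⟨V, hVspec, ?_⟩
      intro v' hv'
      have h1 : ∀ r, Lmap d A zs (v' - V) r = 0 := by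
        intro r
        rw [Lmap_sub]
        rw [← hzsdef] at hv' hVspec
        rw [hv' r, hVspec r, sub_self]
      have h2 := Lmap_inj hn hd hA hirr hzsPF h1
      exact sub_eq_zero.mp h2
    have hKV : Kv d A i j = V := by
      rw [Kv, dif_pos HK]
      exact HK.unique HK.exists.choose_spec hVspec
    have hM00 : M0 + (0:ℝ) • std = A := by
      rw [← hs00]
      exact hM0A
    have hleftval : ∀ s : ℝ, s < 0 → gdef d (M0 + s • std) = zs + s • Kv d A i j := by
      intro s hsneg
      have hnotnn : ¬(∀ p q, 0 ≤ (M0 + s • std) p q) := by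
        intro hcon
        have h1 := hcon i j
        rw [hent, if_pos ⟨rfl, rfl⟩] at h1
        linarith
      rw [gdef, if_neg hnotnn]
      have hMp : Mplus (M0 + s • std) = A := by
        ext p q
        show max ((M0 + s • std) p q) 0 = A p q
        rw [hent]
        by_cases hpq : p = i ∧ q = j
        · rw [if_pos hpq, max_eq_right hsneg.le, hpq.1, hpq.2, ← hs0r, hs00]
        · rw [if_neg hpq]
          exact max_eq_left (hA p q)
      have hsum : (∑ p, ∑ q, (min ((M0 + s • std) p q) 0) • Kv d A p q)
          = s • Kv d A i j := by
        rw [Finset.sum_eq_single i]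
        · rw [Finset.sum_eq_single j]
          · rw [hent, if_pos ⟨rfl, rfl⟩, min_eq_left hsneg.le]
          · intro q _ hq
            rw [hent, if_neg (fun hcon => hq hcon.2), min_eq_right (hA i q), zero_smul]
          · intro hcon
            exact absurd (Finset.mem_univ j) hcon
        · intro p _ hp
          apply Finset.sum_eq_zero
          intro q _
          rw [hent, if_neg (fun hcon => hp hcon.1), min_eq_right (hA p q), zero_smul]
        · intro hcon
          exact absurd (Finset.mem_univ i) hcon
      rw [hMp, hsum, ← hzsdef]
    refine ⟨V i, hVi, ?_⟩
    have hψi : HasDerivAt (fun s => ψ s i) (V i) s0 := hasDerivAt_pi.mp hψd i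
    have hfun : (fun s => gdef d (Matrix.updateRow A i (Function.update (A i) j s)) i)
        = fun s => gdef d (M0 + s • std) i := by
      funext s
      rw [hMs s]
    rw [hfun, hs00]
    rw [hs00] at hψi
    have hf0 : gdef d (M0 + (0:ℝ) • std) i = ψ 0 i := by
      rw [hM00, gdef_of_nonneg hA, ← hzsdef, ← hs00, hψ0]
    apply glue_deriv _ (fun s => ψ s i) (V i) hψi hf0
    · -- right side
      have hball : ∀ᶠ s in 𝓝 (0:ℝ), |s - s0| < εsub := by
        rw [Metric.eventually_nhds_iff]
        exact ⟨εsub, hεsub_pos, fun s hs => by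
          rw [Real.dist_eq] at hs
          rw [hs00]
          simpa using hs⟩
      have hev0 : ∀ᶠ s in 𝓝 (0:ℝ), (∀ p, 0 < ψ s p) ∧
          EqFix (fun p => d p + s * Δd p) (M0 + s • std) (ψ s) := by
        have h := hev
        rw [hs00] at h
        exact h
      filter_upwards [hev0.filter_mono nhdsWithin_le_nhds,
        hball.filter_mono nhdsWithin_le_nhds, self_mem_nhdsWithin] with s h2 h3 hs
      have hspos : 0 < s := hs
      have hUE := valid_uex hn hd (hAs s hspos.le) (hirrs s hspos) (hbrs s)
        (hrows s hspos) hu (c := c/2) (by linarith) (hsubs s h3.le)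
      have hpf : PosFix d (M0 + s • std) (ψ s) := by
        refine ⟨h2.1, ?_⟩
        have h4 := h2.2
        rwa [hline s] at h4
      rw [gdef_of_nonneg (hAs s hspos.le)]
      exact congrFun (g0_eq hUE hpf).symm i
    · -- left side
      intro s hsneg
      rw [hleftval s hsneg, hM00, gdef_of_nonneg hA, ← hzsdef]
      simp only [Pi.add_apply, Pi.smul_apply, smul_eq_mul, hKV]
  · -- interior case s0 > 0 : two-sided
    have hval : ∀ᶠ s in 𝓝 s0, (0 < s) ∧ ∃! z, PosFix d (M0 + s • std) z := by
      rw [Metric.eventually_nhds_iff]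
      refine ⟨min (s0 / 2) εsub, lt_min (by linarith) hεsub_pos, ?_⟩
      intro s hs
      rw [Real.dist_eq] at hs
      have h1 : |s - s0| < s0 / 2 := lt_of_lt_of_le hs (min_le_left _ _)
      have h2 : |s - s0| ≤ εsub := le_of_lt (lt_of_lt_of_le hs (min_le_right _ _))
      have hspos : 0 < s := by
        rw [abs_lt] at h1
        linarith
      exact ⟨hspos, valid_uex hn hd (hAs s hspos.le) (hirrs s hspos) (hbrs s)
        (hrows s hspos) hu (c := c/2) (by linarith) (hsubs s h2)⟩
    have hmatch : (fun s => gdef d (Matrix.updateRow A i (Function.update (A i) j s)))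
        =ᶠ[𝓝 s0] ψ := by
      filter_upwards [hval, hev] with s h1 h2
      have hpf : PosFix d (M0 + s • std) (ψ s) := by
        refine ⟨h2.1, ?_⟩
        have h3 := h2.2
        rwa [hline s] at h3
      rw [← hMs s, gdef_of_nonneg (hAs s h1.1.le)]
      exact (g0_eq h1.2 hpf).symm
    refine ⟨V i, hVi, ?_⟩
    have hψi : HasDerivAt (fun s => ψ s i) (V i) s0 := hasDerivAt_pi.mp hψd i
    apply hψi.congr_of_eventuallyEq
    filter_upwards [hmatch] with s hs
    rw [hs]

end S9

/-- the endemic equilibrium, viewed as a function of the parameters `(D_f, B_f)`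
on the region where A1, A2 and `ρ(I − hD_f + hB_f) > 1` hold, depends differentiably on the
parameters; each component `z*_i` is strictly decreasing in the `i`-th diagonal entry of
`D_f` (negative partial derivative) and strictly increasing in every entry of the `i`-th row
of `B_f` (positive partial derivative). -/
theorem stmt9 {n m : ℕ} (h : ℝ) :
    ∃ g : (SIdx n m → ℝ) → Matrix (SIdx n m) (SIdx n m) ℝ → (SIdx n m → ℝ),
      ∀ (δ : Fin n → ℝ) (δw : Fin m → ℝ) (B : Matrix (Fin n) (Fin n) ℝ)
        (Bw : Matrix (Fin n) (Fin m) ℝ) (Cw : Matrix (Fin m) (Fin n) ℝ) (wmax : ℝ),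
        A1 h δ δw B Bw Cw wmax → Irred (BfM B Bw Cw) →
        1 < specRad (1 - h • DfM δ δw + h • BfM B Bw Cw) →
        (step h (DfM δ δw) (BfM B Bw Cw) (g (Sum.elim δ δw) (BfM B Bw Cw)) =
            g (Sum.elim δ δw) (BfM B Bw Cw)) ∧
        (∀ p, 0 < g (Sum.elim δ δw) (BfM B Bw Cw) p) ∧
        (∀ y : SIdx n m → ℝ, (∀ p, 0 < y p) →
            step h (DfM δ δw) (BfM B Bw Cw) y = y → y = g (Sum.elim δ δw) (BfM B Bw Cw)) ∧
        (∀ i : SIdx n m, ∃ v : ℝ, v < 0 ∧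
            HasDerivAt
              (fun s => g (Function.update (Sum.elim δ δw) i s) (BfM B Bw Cw) i) v
              (Sum.elim δ δw i)) ∧
        (∀ i j : SIdx n m, (i.isLeft = true ∨ j.isLeft = true) → ∃ v : ℝ, 0 < v ∧
            HasDerivAt
              (fun s => g (Sum.elim δ δw)
                (Matrix.updateRow (BfM B Bw Cw) i
                  (Function.update (BfM B Bw Cw i) j s)) i) v
              (BfM B Bw Cw i j)) := by
  classical
  refine ⟨S9.gdef, ?_⟩
  intro δ δw B Bw Cw wmax hA1 hirr hspec
  rcases Nat.eq_zero_or_pos n with hn0 | hn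
  · subst hn0
    rcases Nat.eq_zero_or_pos m with hm0 | hm
    · subst hm0
      refine ⟨?_, ?_, ?_, ?_, ?_⟩
      · funext p
        rcases p with a | a
        · exact a.elim0
        · exact a.elim0
      · intro p
        rcases p with a | a
        · exact a.elim0
        · exact a.elim0
      · intro y hy hstep
        funext p
        rcases p with a | a
        · exact a.elim0
        · exact a.elim0
      · intro i
        rcases i with a | a
        · exact a.elim0
        · exact a.elim0
      · intro i j hsplit
        rcases i with a | a
        · exact a.elim0
        · exact a.elim0
    · exfalso
      obtain ⟨k, -⟩ := hA1.Cw_row_pos ⟨0, hm⟩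
      exact k.elim0
  · set d : SIdx n m → ℝ := Sum.elim δ δw with hddef
    set A : Matrix (SIdx n m) (SIdx n m) ℝ := BfM B Bw Cw with hAdef
    have hh := hA1.h_pos
    have hd : ∀ p, 0 < d p := by
      rintro (i | j)
      · exact hA1.delta_pos i
      · exact hA1.deltaw_pos j
    have hA : ∀ p q, 0 ≤ A p q := by
      rintro (i | j) (k | l)
      · simpa [hAdef, BfM] using hA1.B_nonneg i k
      · simpa [hAdef, BfM] using hA1.Bw_nonneg i l
      · simpa [hAdef, BfM] using hA1.Cw_nonneg j k
      · simp [hAdef, BfM]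
    have hbr : ∀ j' l, A (Sum.inr j') (Sum.inr l) = 0 := by
      intro j' l
      simp [hAdef, BfM]
    have hrow : ∀ j' : Fin m, 0 < ∑ k, A (Sum.inr j') (Sum.inl k) := by
      intro j'
      have hsum : ∑ k, A (Sum.inr j') (Sum.inl k) = ∑ k, Cw j' k := by
        apply Finset.sum_congr rfl
        intro k _
        simp [hAdef, BfM]
      rw [hsum]
      obtain ⟨k0, hk0⟩ := hA1.Cw_row_pos j'
      exact Finset.sum_pos' (fun k _ => hA1.Cw_nonneg j' k) ⟨k0, Finset.mem_univ k0, hk0⟩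
    have hdiag : ∀ p, h * d p ≤ 1 := by
      rintro (i | j)
      · exact (hA1.h_delta i).2
      · exact (hA1.h_deltaw j).2
    have hDfM : DfM δ δw = Matrix.diagonal d := rfl
    have hspec' : 1 < specRad (1 - h • Matrix.diagonal d + h • A) := by
      rw [← hDfM]
      exact hspec
    obtain ⟨c, hc, u, hu, hsub⟩ := S9.param_subsolution hn hh hd hA hirr hdiag hspec'
    have HUex := S9.valid_uex hn hd hA hirr hbr hrow hu hc hsub
    have hpf := S9.g0_posfix HUex
    have hgdef : S9.gdef d A = S9.g0 d A := S9.gdef_of_nonneg hA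
    refine ⟨?_, ?_, ?_, ?_, ?_⟩
    · rw [hDfM, S9.step_fixed_iff (ne_of_gt hh) d A, hgdef]
      exact hpf.2
    · intro p
      rw [hgdef]
      exact hpf.1 p
    · intro y hy hstep
      rw [hgdef]
      apply S9.g0_eq HUex
      refine ⟨hy, ?_⟩
      rw [hDfM, S9.step_fixed_iff (ne_of_gt hh) d A] at hstep
      exact hstep
    · intro i
      exact S9.clause4 hn hd hA hirr hbr hrow hu hc hsub i
    · intro i j hsplit
      exact S9.clause5 hn hd hA hirr hbr hrow hu hc hsub i j hsplit
end

section
/- Consider the time-invariant multi-virus layered SIWS model under Assumption B1. Then for all t ≥ 0, all k ∈ {1,…,l}, all i ∈ {1,…,n} and all j ∈ {1,…,m}: x^k_i(t) ∈ [0,1], w^k_j(t) ∈ [0, w^k_max], and Σ_{a=1}^l x^a_i(t) ∈ [0,1]; in particular the set E is positively invariant. -/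
open Matrix Filter

/-- One step of the multi-virus SIWS dynamics for all viruses simultaneously:
`z^k ↦ z^k − h (D_f^k − (I − Σ_a Z(z^a)) B_f^k) z^k`. -/
noncomputable def mstep {l n m : ℕ} (h : ℝ)
    (Dfm Bfm : Fin l → Matrix (SIdx n m) (SIdx n m) ℝ)
    (z : Fin l → SIdx n m → ℝ) : Fin l → SIdx n m → ℝ :=
  fun k => z k - h • ((Dfm k - (1 - ∑ a, Zm (z a)) * Bfm k).mulVec (z k))

/-- The multi-virus system domain `E`. -/
def inE {l n m : ℕ} (wmax : Fin l → ℝ) (z : Fin l → SIdx n m → ℝ) : Prop :=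
  (∀ k, (∀ i : Fin n, z k (Sum.inl i) ∈ Set.Icc (0 : ℝ) 1) ∧
    ∀ j : Fin m, z k (Sum.inr j) ∈ Set.Icc (0 : ℝ) (wmax k)) ∧
  ∀ i : Fin n, (∑ k, z k (Sum.inl i)) ≤ 1

/-- Assumption B1 (parameter part) on the multi-virus SIWS model. -/
structure B1 {l n m : ℕ} (h : ℝ) (δ : Fin l → Fin n → ℝ) (δw : Fin l → Fin m → ℝ)
    (B : Fin l → Matrix (Fin n) (Fin n) ℝ) (Bw : Fin l → Matrix (Fin n) (Fin m) ℝ)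
    (Cw : Fin l → Matrix (Fin m) (Fin n) ℝ) (wmax : Fin l → ℝ) : Prop where
  h_pos : 0 < h
  delta_pos : ∀ k i, 0 < δ k i
  deltaw_pos : ∀ k j, 0 < δw k j
  B_nonneg : ∀ k i j, 0 ≤ B k i j
  Bw_nonneg : ∀ k i j, 0 ≤ Bw k i j
  Cw_nonneg : ∀ k j i, 0 ≤ Cw k j i
  Cw_row_pos : ∀ k j, ∃ i, 0 < Cw k j i
  wmax_pos : ∀ k, 0 < wmax k
  ratio_mem : ∀ k j, (∑ i, Cw k j i) / δw k j ∈ Set.Icc (0 : ℝ) (wmax k)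
  h_delta : ∀ k i, h * δ k i ∈ Set.Ioc (0 : ℝ) 1
  h_deltaw : ∀ k j, h * δw k j ∈ Set.Ioc (0 : ℝ) 1
  h_beta : ∀ i : Fin n,
    h * (∑ k, ((∑ j, B k i j) + ∑ j, Bw k i j * wmax k)) ∈ Set.Icc (0 : ℝ) 1

/-- Assumption B3: `h(δ^k_i + Σ_j β^k_{ij} + Σ_j β^{wk}_{ij} w^k_max) ∈ [0,1]` for all `i, k`. -/
def B3 {l n m : ℕ} (h : ℝ) (δ : Fin l → Fin n → ℝ) (B : Fin l → Matrix (Fin n) (Fin n) ℝ)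
    (Bw : Fin l → Matrix (Fin n) (Fin m) ℝ) (wmax : Fin l → ℝ) : Prop :=
  ∀ k i, h * (δ k i + (∑ j, B k i j) + ∑ j, Bw k i j * wmax k) ∈ Set.Icc (0 : ℝ) 1

lemma sumZ_diag {l n m : ℕ} (z : Fin l → SIdx n m → ℝ) :
    (1 : Matrix (SIdx n m) (SIdx n m) ℝ) - ∑ a, Zm (z a)
      = Matrix.diagonal (Sum.elim (fun i => 1 - ∑ a, z a (Sum.inl i)) fun _ => 1) := by
  ext x y
  rcases eq_or_ne x y with rfl | hxy
  · cases x <;> simp [Zm, Matrix.sum_apply, Matrix.diagonal_apply_eq, Matrix.one_apply_eq]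
  · simp [Zm, Matrix.sum_apply, Matrix.diagonal_apply_ne _ hxy, Matrix.one_apply_ne hxy]

lemma bf_mulVec_inl {n m : ℕ} (B : Matrix (Fin n) (Fin n) ℝ) (Bw : Matrix (Fin n) (Fin m) ℝ)
    (Cw : Matrix (Fin m) (Fin n) ℝ) (v : SIdx n m → ℝ) (i : Fin n) :
    (BfM B Bw Cw).mulVec v (Sum.inl i)
      = (∑ j, B i j * v (Sum.inl j)) + ∑ j, Bw i j * v (Sum.inr j) := by
  simp [BfM, Matrix.mulVec, dotProduct, Fintype.sum_sum_type]

lemma bf_mulVec_inr {n m : ℕ} (B : Matrix (Fin n) (Fin n) ℝ) (Bw : Matrix (Fin n) (Fin m) ℝ)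
    (Cw : Matrix (Fin m) (Fin n) ℝ) (v : SIdx n m → ℝ) (j : Fin m) :
    (BfM B Bw Cw).mulVec v (Sum.inr j) = ∑ i, Cw j i * v (Sum.inl i) := by
  simp [BfM, Matrix.mulVec, dotProduct, Fintype.sum_sum_type]

lemma mstep_inl {l n m : ℕ} (h : ℝ) (δ : Fin l → Fin n → ℝ) (δw : Fin l → Fin m → ℝ)
    (B : Fin l → Matrix (Fin n) (Fin n) ℝ) (Bw : Fin l → Matrix (Fin n) (Fin m) ℝ)
    (Cw : Fin l → Matrix (Fin m) (Fin n) ℝ) (z : Fin l → SIdx n m → ℝ) (k : Fin l) (i : Fin n) :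
    mstep h (fun k => DfM (δ k) (δw k)) (fun k => BfM (B k) (Bw k) (Cw k)) z k (Sum.inl i)
      = z k (Sum.inl i) - h * (δ k i * z k (Sum.inl i)
          - (1 - ∑ a, z a (Sum.inl i)) *
            ((∑ j, B k i j * z k (Sum.inl j)) + ∑ j, Bw k i j * z k (Sum.inr j))) := by
  have : mstep h (fun k => DfM (δ k) (δw k)) (fun k => BfM (B k) (Bw k) (Cw k)) z k (Sum.inl i)
      = z k (Sum.inl i) - h * ((DfM (δ k) (δw k)).mulVec (z k) (Sum.inl i)
          - ((1 - ∑ a, Zm (z a)) * BfM (B k) (Bw k) (Cw k)).mulVec (z k) (Sum.inl i)) := by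
    simp [mstep, Matrix.sub_mulVec]
  rw [this, sumZ_diag, ← Matrix.mulVec_mulVec]
  simp [DfM, Matrix.mulVec_diagonal, bf_mulVec_inl]

lemma mstep_inr {l n m : ℕ} (h : ℝ) (δ : Fin l → Fin n → ℝ) (δw : Fin l → Fin m → ℝ)
    (B : Fin l → Matrix (Fin n) (Fin n) ℝ) (Bw : Fin l → Matrix (Fin n) (Fin m) ℝ)
    (Cw : Fin l → Matrix (Fin m) (Fin n) ℝ) (z : Fin l → SIdx n m → ℝ) (k : Fin l) (j : Fin m) :
    mstep h (fun k => DfM (δ k) (δw k)) (fun k => BfM (B k) (Bw k) (Cw k)) z k (Sum.inr j)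
      = z k (Sum.inr j) - h * (δw k j * z k (Sum.inr j) - ∑ i, Cw k j i * z k (Sum.inl i)) := by
  have : mstep h (fun k => DfM (δ k) (δw k)) (fun k => BfM (B k) (Bw k) (Cw k)) z k (Sum.inr j)
      = z k (Sum.inr j) - h * ((DfM (δ k) (δw k)).mulVec (z k) (Sum.inr j)
          - ((1 - ∑ a, Zm (z a)) * BfM (B k) (Bw k) (Cw k)).mulVec (z k) (Sum.inr j)) := by
    simp [mstep, Matrix.sub_mulVec]
  rw [this, sumZ_diag, ← Matrix.mulVec_mulVec]
  simp [DfM, Matrix.mulVec_diagonal, bf_mulVec_inr]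

/-- positive invariance for the multi-virus model: all infection levels stay
in `[0,1]`, all contamination levels stay in `[0, w^k_max]`, and the total infection level
of each node stays in `[0,1]`; i.e. `E` is positively invariant. -/
theorem stmt13 {l n m : ℕ} (h : ℝ) (δ : Fin l → Fin n → ℝ) (δw : Fin l → Fin m → ℝ)
    (B : Fin l → Matrix (Fin n) (Fin n) ℝ) (Bw : Fin l → Matrix (Fin n) (Fin m) ℝ)
    (Cw : Fin l → Matrix (Fin m) (Fin n) ℝ) (wmax : Fin l → ℝ)
    (hB1 : B1 h δ δw B Bw Cw wmax)
    (z : ℕ → Fin l → SIdx n m → ℝ)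
    (hx0 : ∀ k i, z 0 k (Sum.inl i) ∈ Set.Icc (0 : ℝ) 1)
    (hsum0 : ∀ i, (∑ k, z 0 k (Sum.inl i)) ∈ Set.Icc (0 : ℝ) 1)
    (hw0 : ∀ k j, z 0 k (Sum.inr j) ∈ Set.Icc (0 : ℝ) (wmax k))
    (hdyn : ∀ t, z (t + 1) =
      mstep h (fun k => DfM (δ k) (δw k)) (fun k => BfM (B k) (Bw k) (Cw k)) (z t)) :
    ∀ t, (∀ k, (∀ i, z t k (Sum.inl i) ∈ Set.Icc (0 : ℝ) 1) ∧
        ∀ j, z t k (Sum.inr j) ∈ Set.Icc (0 : ℝ) (wmax k)) ∧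
      ∀ i, (∑ k, z t k (Sum.inl i)) ∈ Set.Icc (0 : ℝ) 1 := by
  intro t
  induction t with
  | zero => exact ⟨fun k => ⟨hx0 k, hw0 k⟩, hsum0⟩
  | succ t ih =>
    obtain ⟨hkv, hs⟩ := ih
    have hx0' : ∀ k i, 0 ≤ z t k (Sum.inl i) := fun k i => ((hkv k).1 i).1
    have hx1' : ∀ k i, z t k (Sum.inl i) ≤ 1 := fun k i => ((hkv k).1 i).2
    have hw0' : ∀ k j, 0 ≤ z t k (Sum.inr j) := fun k j => ((hkv k).2 j).1
    have hw1' : ∀ k j, z t k (Sum.inr j) ≤ wmax k := fun k j => ((hkv k).2 j).2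
    have hdn := hdyn t
    have hxeq : ∀ k i, z (t+1) k (Sum.inl i)
        = z t k (Sum.inl i) - h * (δ k i * z t k (Sum.inl i)
          - (1 - ∑ a, z t a (Sum.inl i)) *
            ((∑ j, B k i j * z t k (Sum.inl j)) + ∑ j, Bw k i j * z t k (Sum.inr j))) := by
      intro k i; rw [hdn]; exact mstep_inl h δ δw B Bw Cw (z t) k i
    have hweq : ∀ k j, z (t+1) k (Sum.inr j)
        = z t k (Sum.inr j) - h * (δw k j * z t k (Sum.inr j)
            - ∑ i, Cw k j i * z t k (Sum.inl i)) := by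
      intro k j; rw [hdn]; exact mstep_inr h δ δw B Bw Cw (z t) k j
    have hpos := hB1.h_pos
    -- bounds on f
    have hf0 : ∀ k i, 0 ≤ (∑ j, B k i j * z t k (Sum.inl j)) + ∑ j, Bw k i j * z t k (Sum.inr j) := by
      intro k i
      have h1 : (0:ℝ) ≤ ∑ j, B k i j * z t k (Sum.inl j) :=
        Finset.sum_nonneg fun j _ => mul_nonneg (hB1.B_nonneg k i j) (hx0' k j)
      have h2 : (0:ℝ) ≤ ∑ j, Bw k i j * z t k (Sum.inr j) :=
        Finset.sum_nonneg fun j _ => mul_nonneg (hB1.Bw_nonneg k i j) (hw0' k j)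
      linarith
    have hfF : ∀ k i, (∑ j, B k i j * z t k (Sum.inl j)) + ∑ j, Bw k i j * z t k (Sum.inr j)
        ≤ (∑ j, B k i j) + ∑ j, Bw k i j * wmax k := by
      intro k i
      have h1 : ∑ j, B k i j * z t k (Sum.inl j) ≤ ∑ j, B k i j :=
        Finset.sum_le_sum fun j _ => by
          nlinarith [hB1.B_nonneg k i j, hx1' k j, hx0' k j]
      have h2 : ∑ j, Bw k i j * z t k (Sum.inr j) ≤ ∑ j, Bw k i j * wmax k :=
        Finset.sum_le_sum fun j _ =>
          mul_le_mul_of_nonneg_left (hw1' k j) (hB1.Bw_nonneg k i j)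
      linarith
    -- nonnegativity of x'
    have hx0'' : ∀ k i, 0 ≤ z (t+1) k (Sum.inl i) := by
      intro k i
      rw [hxeq]
      have hhd := hB1.h_delta k i
      have hs1 : (∑ a, z t a (Sum.inl i)) ≤ 1 := (hs i).2
      have := hf0 k i
      have hxi0 := hx0' k i
      nlinarith [mul_nonneg (mul_nonneg hpos.le (by linarith : (0:ℝ) ≤ 1 - ∑ a, z t a (Sum.inl i))) this,
        mul_nonneg hxi0 (sub_nonneg.2 hhd.2)]
    -- sum ≤ 1
    have hsum1 : ∀ i, (∑ k, z (t+1) k (Sum.inl i)) ≤ 1 := by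
      intro i
      have hstep : ∀ k : Fin l, z (t+1) k (Sum.inl i)
          ≤ z t k (Sum.inl i)
            + h * (1 - ∑ a, z t a (Sum.inl i)) * ((∑ j, B k i j) + ∑ j, Bw k i j * wmax k) := by
        intro k
        rw [hxeq]
        have hhd := hB1.h_delta k i
        have hs1 : (∑ a, z t a (Sum.inl i)) ≤ 1 := (hs i).2
        have hF := hfF k i
        have hf := hf0 k i
        have hxi0 := hx0' k i
        nlinarith [mul_nonneg hpos.le (sub_nonneg.2 hs1),
          mul_le_mul_of_nonneg_left hF (mul_nonneg hpos.le (sub_nonneg.2 hs1)),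
          mul_nonneg (mul_nonneg hpos.le (hB1.delta_pos k i).le) hxi0]
      have h2 : (∑ k, z (t+1) k (Sum.inl i))
          ≤ (∑ k, z t k (Sum.inl i))
            + h * (1 - ∑ a, z t a (Sum.inl i)) * ∑ k, ((∑ j, B k i j) + ∑ j, Bw k i j * wmax k) := by
        rw [Finset.mul_sum, ← Finset.sum_add_distrib]
        exact Finset.sum_le_sum fun k _ => hstep k
      have hb := hB1.h_beta i
      have hs1 : (∑ a, z t a (Sum.inl i)) ≤ 1 := (hs i).2
      have hs0 : (0:ℝ) ≤ ∑ a, z t a (Sum.inl i) := (hs i).1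
      nlinarith [hb.1, hb.2]
    have hsum0' : ∀ i, (0:ℝ) ≤ ∑ k, z (t+1) k (Sum.inl i) :=
      fun i => Finset.sum_nonneg fun k _ => hx0'' k i
    have hx1'' : ∀ k i, z (t+1) k (Sum.inl i) ≤ 1 := by
      intro k i
      calc z (t+1) k (Sum.inl i) ≤ ∑ a, z (t+1) a (Sum.inl i) :=
            Finset.single_le_sum (fun a _ => hx0'' a i) (Finset.mem_univ k)
        _ ≤ 1 := hsum1 i
    -- w bounds
    have hwB : ∀ k j, z (t+1) k (Sum.inr j) ∈ Set.Icc (0:ℝ) (wmax k) := by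
      intro k j
      rw [hweq]
      have hhd := hB1.h_deltaw k j
      have hc0 : (0:ℝ) ≤ ∑ i, Cw k j i * z t k (Sum.inl i) :=
        Finset.sum_nonneg fun i _ => mul_nonneg (hB1.Cw_nonneg k j i) (hx0' k i)
      have hc1 : (∑ i, Cw k j i * z t k (Sum.inl i)) ≤ δw k j * wmax k := by
        have h1 : (∑ i, Cw k j i * z t k (Sum.inl i)) ≤ ∑ i, Cw k j i :=
          Finset.sum_le_sum fun i _ => by
            nlinarith [hB1.Cw_nonneg k j i, hx1' k i, hx0' k i]
        have h2 := (hB1.ratio_mem k j).2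
        have hdw := hB1.deltaw_pos k j
        rw [div_le_iff₀ hdw] at h2
        linarith [h2]
      have hw0j := hw0' k j
      have hw1j := hw1' k j
      constructor
      · nlinarith [mul_nonneg hpos.le hc0, mul_nonneg hw0j (sub_nonneg.2 hhd.2)]
      · nlinarith [mul_le_mul_of_nonneg_left hc1 hpos.le,
          mul_nonneg (sub_nonneg.2 hw1j) (sub_nonneg.2 hhd.2)]
    exact ⟨fun k => ⟨fun i => ⟨hx0'' k i, hx1'' k i⟩, hwB k⟩,
      fun i => ⟨hsum0' i, hsum1 i⟩⟩
end
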